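/- arXiv:1907.08771 — 8 statements merged into one kernel-verified Lean document; each statement's English description precedes it below -/
import Mathlib

section
/- High-Frequency Maximality Theorem: under the stated assumptions, the optimal expected logarithmic growth of the buy-and-holder never exceeds that of the high-frequency trader; that is, g_n* ≤ g_1*. -/
open MeasureTheory ProbabilityTheory Real

private lemma hfm_comb_bounds {K t a b : ℝ} (hK0 : 0 ≤ K) (hK1 : K ≤ 1)
    (h1 : a ≤ t) (h2 : t ≤ b) :
    min 1 a ≤ 1 - K + K * t ∧ 1 - K + K * t ≤ max 1 b := by
  constructor
  · rcases le_total 1 t with h | h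
    · have h3 : min 1 a ≤ 1 := min_le_left _ _
      nlinarith
    · have h3 : min 1 a ≤ a := min_le_right _ _
      nlinarith
  · rcases le_total 1 t with h | h
    · have h3 : b ≤ max 1 b := le_max_right _ _
      nlinarith
    · have h3 : (1:ℝ) ≤ max 1 b := le_max_left _ _
      nlinarith

private lemma hfm_abs_log_le {t a b : ℝ} (ha : 0 < a) (h1 : a ≤ t) (h2 : t ≤ b) :
    |Real.log t| ≤ max (-Real.log a) (Real.log b) := by
  have ht : 0 < t := lt_of_lt_of_le ha h1
  rw [abs_le]
  constructor
  · have h3 : Real.log a ≤ Real.log t := Real.log_le_log ha h1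
    have h4 : -Real.log a ≤ max (-Real.log a) (Real.log b) := le_max_left _ _
    linarith
  · have h3 : Real.log t ≤ Real.log b := Real.log_le_log ht h2
    have h4 : Real.log b ≤ max (-Real.log a) (Real.log b) := le_max_right _ _
    linarith

private lemma hfm_abs_log_comb_le {K t a b : ℝ} (hK0 : 0 ≤ K) (hK1 : K ≤ 1)
    (ha : 0 < a) (h1 : a ≤ t) (h2 : t ≤ b) :
    |Real.log (1 - K + K * t)| ≤ max (-Real.log (min 1 a)) (Real.log (max 1 b)) := by
  obtain ⟨hl, hr⟩ := hfm_comb_bounds hK0 hK1 h1 h2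
  exact hfm_abs_log_le (lt_min one_pos ha) hl hr

private lemma hfm_integrable_of_bdd {α : Type*} [MeasurableSpace α] {ν : Measure α}
    [IsFiniteMeasure ν] {f : α → ℝ} (hf : AEStronglyMeasurable f ν) (C : ℝ)
    (h : ∀ᵐ a ∂ν, |f a| ≤ C) : Integrable f ν :=
  ⟨hf, MeasureTheory.HasFiniteIntegral.of_bounded
    (by simpa [Real.norm_eq_abs] using h)⟩

private lemma hfm_integral_le_const {α : Type*} [MeasurableSpace α] {ν : Measure α}
    [IsProbabilityMeasure ν] {f : α → ℝ} (hf : Integrable f ν) {c : ℝ}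
    (h : ∀ᵐ a ∂ν, f a ≤ c) : ∫ a, f a ∂ν ≤ c := by
  calc ∫ a, f a ∂ν ≤ ∫ _, c ∂ν := integral_mono_ae hf (integrable_const c) h
  _ = c := by simp

private lemma hfm_ae_prod_mem {A B : Set ℝ} (hA : MeasurableSet A) (hB : MeasurableSet B)
    {ρ ν : Measure ℝ} [SigmaFinite ν] [SigmaFinite ρ]
    (h1 : ∀ᵐ y ∂ρ, y ∈ A) (h2 : ∀ᵐ z ∂ν, z ∈ B) :
    ∀ᵐ p ∂ρ.prod ν, p.1 ∈ A ∧ p.2 ∈ B := by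
  have l1 : ∀ᵐ p ∂ρ.prod ν, p.1 ∈ A := by
    rw [ae_iff] at h1 ⊢
    have he : {p : ℝ × ℝ | ¬ p.1 ∈ A} = (Aᶜ) ×ˢ (Set.univ : Set ℝ) := by
      ext p; simp
    have hA0 : ρ (Aᶜ) = 0 := h1
    rw [he, Measure.prod_prod, hA0, zero_mul]
  have l2 : ∀ᵐ p ∂ρ.prod ν, p.2 ∈ B := by
    rw [ae_iff] at h2 ⊢
    have he : {p : ℝ × ℝ | ¬ p.2 ∈ B} = (Set.univ : Set ℝ) ×ˢ (Bᶜ) := by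
      ext p; simp
    have hB0 : ν (Bᶜ) = 0 := h2
    rw [he, Measure.prod_prod, hB0, mul_zero]
  exact l1.and l2

/-- **High-Frequency Maximality Theorem.**
For i.i.d. returns `X 0, …, X (n-1)` bounded a.s. in `[Xmin, Xmax]` with
`-1 < Xmin < 0 < Xmax`, the optimal expected logarithmic growth of the
buy-and-holder, `g_n* = sup_{K ∈ [0,1]} (1/n) E[log (1 + K 𝒳_n)]` with compound
return `𝒳_n = ∏_{k<n} (1 + X k) - 1`, never exceeds that of the high-frequency
trader, `g_1* = sup_{K ∈ [0,1]} E[log (1 + K X 0)]`. -/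
theorem high_frequency_maximality
    {Ω : Type*} [MeasureSpace Ω] [IsProbabilityMeasure (ℙ : Measure Ω)]
    (n : ℕ) (hn : 1 ≤ n) (X : ℕ → Ω → ℝ)
    (hmeas : ∀ i, Measurable (X i))
    (hindep : iIndepFun (fun i : Fin n => X i) ℙ)
    (hident : ∀ i < n, IdentDistrib (X i) (X 0) ℙ ℙ)
    (Xmin Xmax : ℝ) (hXmin : -1 < Xmin) (hXminNeg : Xmin < 0) (hXmaxPos : 0 < Xmax)
    (hbdd : ∀ i < n, ∀ᵐ ω ∂ℙ, X i ω ∈ Set.Icc Xmin Xmax) :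
    (⨆ K : Set.Icc (0:ℝ) 1,
        (1 / (n : ℝ)) *
          ∫ ω, Real.log (1 + (K : ℝ) * (∏ k ∈ Finset.range n, (1 + X k ω) - 1)) ∂ℙ)
      ≤ ⨆ K : Set.Icc (0:ℝ) 1, ∫ ω, Real.log (1 + (K : ℝ) * X 0 ω) ∂ℙ := by
  haveI : Nonempty (Set.Icc (0:ℝ) 1) :=
    Set.Nonempty.to_subtype (Set.nonempty_Icc.2 zero_le_one)
  set C : ℝ := 1 + Xmin with hCdef
  set D : ℝ := 1 + Xmax with hDdef
  have hC : 0 < C := by rw [hCdef]; linarith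
  have hD : 0 < D := by rw [hDdef]; linarith
  set G : ℝ := ⨆ K : Set.Icc (0:ℝ) 1, ∫ ω, Real.log (1 + (K : ℝ) * X 0 ω) ∂ℙ with hGdef
  set M : ℝ := max (-Real.log (min 1 C)) (Real.log (max 1 D)) with hMdef
  -- basic measurability
  have hlogmeas : ∀ c : ℝ, Measurable (fun ω => Real.log (1 + c * X 0 ω)) := fun c =>
    Real.measurable_log.comp (measurable_const.add (measurable_const.mul (hmeas 0)))
  -- a.e. bound for the single-period integrand
  have hbd1 : ∀ c ∈ Set.Icc (0:ℝ) 1,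
      ∀ᵐ ω ∂ℙ, |Real.log (1 + c * X 0 ω)| ≤ M := by
    intro c hc
    filter_upwards [hbdd 0 hn] with ω hω
    have h1 : 1 + c * X 0 ω = 1 - c + c * (1 + X 0 ω) := by ring
    rw [h1, hMdef]
    exact hfm_abs_log_comb_le hc.1 hc.2 hC
      (by rw [hCdef]; linarith [hω.1]) (by rw [hDdef]; linarith [hω.2])
  have hint1 : ∀ c ∈ Set.Icc (0:ℝ) 1,
      Integrable (fun ω => Real.log (1 + c * X 0 ω)) ℙ := fun c hc =>
    hfm_integrable_of_bdd (hlogmeas c).aestronglyMeasurable M (hbd1 c hc)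
  -- every single-period value is ≤ G
  have hBdd : BddAbove (Set.range fun K : Set.Icc (0:ℝ) 1 =>
      ∫ ω, Real.log (1 + (K : ℝ) * X 0 ω) ∂ℙ) := by
    refine ⟨M, ?_⟩
    rintro _ ⟨K, rfl⟩
    exact hfm_integral_le_const (hint1 K K.2)
      ((hbd1 K K.2).mono fun ω h => (le_abs_self _).trans h)
  have hGmem : ∀ c : ℝ, c ∈ Set.Icc (0:ℝ) 1 →
      ∫ ω, Real.log (1 + c * X 0 ω) ∂ℙ ≤ G := by
    intro c hc
    exact le_ciSup hBdd (⟨c, hc⟩ : Set.Icc (0:ℝ) 1)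
  have hG0 : 0 ≤ G := by
    have := hGmem 0 ⟨le_refl _, zero_le_one⟩
    simpa using this
  -- Main induction
  have main : ∀ K : ℝ, K ∈ Set.Icc (0:ℝ) 1 → ∀ m, m ≤ n →
      ∫ ω, Real.log (1 - K + K * ∏ k ∈ Finset.range m, (1 + X k ω)) ∂ℙ
        ≤ (m : ℝ) * G := by
    intro K hK m
    induction m with
    | zero => intro _; simp
    | succ m ih =>
      intro hm1
      have hmn : m < n := hm1
      have ihm := ih (le_of_lt hmn)
      -- the two random variables
      set Y : Ω → ℝ := fun ω => ∏ k ∈ Finset.range m, (1 + X k ω) with hYdef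
      set Z : Ω → ℝ := fun ω => 1 + X m ω with hZdef
      have hYmeas : Measurable Y := by
        apply Finset.measurable_prod
        intro i _
        exact measurable_const.add (hmeas i)
      have hZmeas : Measurable Z := measurable_const.add (hmeas m)
      -- independence of Y and Z
      have hYZindep : IndepFun Y Z ℙ := by
        set f : Fin n → Ω → ℝ := fun i => (fun x : ℝ => 1 + x) ∘ X (i : ℕ) with hfdef
        have hfindep : iIndepFun f ℙ :=
          hindep.comp (fun _ => fun x : ℝ => 1 + x)
            (fun _ => measurable_const.add measurable_id)
        have hfmeas : ∀ i, Measurable (f i) := fun i =>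
          measurable_const.add (hmeas i)
        set s : Finset (Fin n) :=
          (Finset.univ : Finset (Fin m)).map (Fin.castLEEmb (le_of_lt hmn))
          with hsdef
        have hmem : (⟨m, hmn⟩ : Fin n) ∉ s := by
          rw [hsdef]
          simp only [Finset.mem_map, Finset.mem_univ, true_and, not_exists]
          intro j hj
          have h2 : (((Fin.castLEEmb (le_of_lt hmn)) j : Fin n) : ℕ) = m :=
            congrArg Fin.val hj
          have h3 : (((Fin.castLEEmb (le_of_lt hmn)) j : Fin n) : ℕ) = (j : ℕ) := rfl
          have h4 := j.isLt
          omega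
        have h := hfindep.indepFun_finsetProd_of_notMem hfmeas hmem
        have heq : (∏ j ∈ s, f j) = Y := by
          funext ω
          rw [Finset.prod_apply, hsdef, Finset.prod_map]
          show (∏ j : Fin m, f ((Fin.castLEEmb (le_of_lt hmn)) j) ω)
              = ∏ k ∈ Finset.range m, (1 + X k ω)
          rw [← Fin.prod_univ_eq_prod_range (fun k => 1 + X k ω) m]
          apply Finset.prod_congr rfl
          intro j _
          simp [hfdef, Function.comp]
        have heq2 : f ⟨m, hmn⟩ = Z := by
          funext ω; simp [hfdef, hZdef, Function.comp]
        rwa [heq, heq2] at h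
      -- laws
      set ρ : Measure ℝ := Measure.map Y ℙ with hρdef
      set ν : Measure ℝ := Measure.map Z ℙ with hνdef
      haveI : IsProbabilityMeasure ρ := Measure.isProbabilityMeasure_map hYmeas.aemeasurable
      haveI : IsProbabilityMeasure ν := Measure.isProbabilityMeasure_map hZmeas.aemeasurable
      have hmap : Measure.map (fun ω => (Y ω, Z ω)) ℙ = ρ.prod ν :=
        (indepFun_iff_map_prod_eq_prod_map_map hYmeas.aemeasurable
          hZmeas.aemeasurable).mp hYZindep
      -- a.e. bounds on Y and Z
      have hYbdd : ∀ᵐ ω ∂ℙ, Y ω ∈ Set.Icc (C ^ m) (D ^ m) := by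
        have hall : ∀ᵐ ω ∂ℙ, ∀ k, k < m → X k ω ∈ Set.Icc Xmin Xmax := by
          rw [ae_all_iff]
          intro k
          by_cases hk : k < m
          · exact (hbdd k (lt_trans hk hmn)).mono fun ω h _ => h
          · exact Filter.Eventually.of_forall fun ω h => absurd h hk
        filter_upwards [hall] with ω hω
        constructor
        · rw [hYdef]
          have := Finset.prod_le_prod (s := Finset.range m)
            (f := fun _ => C) (g := fun k => 1 + X k ω)
            (fun i _ => le_of_lt hC)
            (fun i hi => by
              have := (hω i (Finset.mem_range.mp hi)).1
              show C ≤ 1 + X i ω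
              rw [hCdef]; linarith)
          simpa using this
        · rw [hYdef]
          have := Finset.prod_le_prod (s := Finset.range m)
            (f := fun k => 1 + X k ω) (g := fun _ => D)
            (fun i hi => by
              have := (hω i (Finset.mem_range.mp hi)).1
              show (0:ℝ) ≤ 1 + X i ω
              rw [hCdef] at hC; linarith)
            (fun i hi => by
              have := (hω i (Finset.mem_range.mp hi)).2
              show 1 + X i ω ≤ D
              rw [hDdef]; linarith)
          simpa using this
      have hZbdd : ∀ᵐ ω ∂ℙ, Z ω ∈ Set.Icc C D := by
        filter_upwards [hbdd m hmn] with ω hω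
        exact ⟨by rw [hZdef, hCdef]; simp; linarith [hω.1],
               by rw [hZdef, hDdef]; simp; linarith [hω.2]⟩
      have hρbdd : ∀ᵐ y ∂ρ, y ∈ Set.Icc (C ^ m) (D ^ m) := by
        exact (ae_map_iff hYmeas.aemeasurable measurableSet_Icc).mpr hYbdd
      have hνbdd : ∀ᵐ z ∂ν, z ∈ Set.Icc C D := by
        exact (ae_map_iff hZmeas.aemeasurable measurableSet_Icc).mpr hZbdd
      -- the two-variable integrand
      set P : ℝ × ℝ → ℝ := fun p => Real.log (1 - K + K * (p.1 * p.2)) with hPdef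
      have hPmeas : Measurable P :=
        Real.measurable_log.comp (measurable_const.add
          (measurable_const.mul (measurable_fst.mul measurable_snd)))
      have hCm : (0:ℝ) < C ^ m := pow_pos hC m
      have hPbd : ∀ᵐ p ∂ρ.prod ν, |P p| ≤
          max (-Real.log (min 1 (C ^ (m+1)))) (Real.log (max 1 (D ^ (m+1)))) := by
        filter_upwards [hfm_ae_prod_mem measurableSet_Icc measurableSet_Icc hρbdd hνbdd]
          with p hp
        have h1 : C ^ (m+1) ≤ p.1 * p.2 := by
          rw [pow_succ]
          exact mul_le_mul hp.1.1 hp.2.1 (le_of_lt hC) (le_trans (le_of_lt hCm) hp.1.1)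
        have h2 : p.1 * p.2 ≤ D ^ (m+1) := by
          rw [pow_succ]
          exact mul_le_mul hp.1.2 hp.2.2 (le_trans (le_of_lt hC) hp.2.1)
            (le_of_lt (pow_pos hD m))
        exact hfm_abs_log_comb_le hK.1 hK.2 (pow_pos hC (m+1)) h1 h2
      have hPint : Integrable P (ρ.prod ν) :=
        hfm_integrable_of_bdd hPmeas.aestronglyMeasurable _ hPbd
      -- rewrite the (m+1)-integral as a double integral
      have step1 : ∫ ω, Real.log (1 - K + K * ∏ k ∈ Finset.range (m+1), (1 + X k ω)) ∂ℙ
          = ∫ y, ∫ z, P (y, z) ∂ν ∂ρ := by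
        have e1 : (fun ω => Real.log (1 - K + K * ∏ k ∈ Finset.range (m+1), (1 + X k ω)))
            = fun ω => P (Y ω, Z ω) := by
          funext ω
          rw [hPdef]
          simp only [Finset.prod_range_succ]
          rfl
        rw [e1]
        have e2 : ∫ ω, P (Y ω, Z ω) ∂ℙ = ∫ p, P p ∂(Measure.map (fun ω => (Y ω, Z ω)) ℙ) := by
          rw [integral_map (hYmeas.aemeasurable.prodMk hZmeas.aemeasurable)
            hPmeas.aestronglyMeasurable]
        rw [e2, hmap, integral_prod _ hPint]
      rw [step1]
      -- bound the inner integral for a.e. y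
      have inner_bd : ∀ᵐ y ∂ρ, ∫ z, P (y, z) ∂ν ≤ Real.log (1 - K + K * y) + G := by
        filter_upwards [hρbdd] with y hy
        have hy0 : 0 < y := lt_of_lt_of_le hCm hy.1
        have hden : 0 < 1 - K + K * y := by
          have := (hfm_comb_bounds hK.1 hK.2 hy.1 hy.2).1
          exact lt_of_lt_of_le (lt_min one_pos hCm) this
        set f : ℝ := K * y / (1 - K + K * y) with hfdef2
        have hf0 : 0 ≤ f := div_nonneg (mul_nonneg hK.1 (le_of_lt hy0)) (le_of_lt hden)
        have hf1 : f ≤ 1 := by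
          rw [hfdef2, div_le_one hden]
          have : 0 ≤ 1 - K := by linarith [hK.2]
          linarith
        -- pointwise split of logarithm for z ∈ [C, D]
        have hsplit : ∀ᵐ z ∂ν, P (y, z)
            = Real.log (1 - K + K * y) + Real.log (1 - f + f * z) := by
          filter_upwards [hνbdd] with z hz
          have hz0 : 0 < 1 - f + f * z := by
            have := (hfm_comb_bounds hf0 hf1 hz.1 hz.2).1
            exact lt_of_lt_of_le (lt_min one_pos hC) this
          have hprod_eq : (1 - K + K * y) * (1 - f + f * z) = 1 - K + K * (y * z) := by
            rw [hfdef2]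
            field_simp
            ring
          rw [hPdef]
          simp only
          rw [← hprod_eq, Real.log_mul (ne_of_gt hden) (ne_of_gt hz0)]
        have hint_f : Integrable (fun z => Real.log (1 - f + f * z)) ν := by
          apply hfm_integrable_of_bdd
            (Real.measurable_log.comp (measurable_const.add
              (measurable_const.mul measurable_id))).aestronglyMeasurable
            (max (-Real.log (min 1 C)) (Real.log (max 1 D)))
          filter_upwards [hνbdd] with z hz
          exact hfm_abs_log_comb_le hf0 hf1 hC hz.1 hz.2
        have e3 : ∫ z, P (y, z) ∂ν
            = Real.log (1 - K + K * y) + ∫ z, Real.log (1 - f + f * z) ∂ν := by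
          rw [integral_congr_ae hsplit, integral_add (integrable_const _) hint_f]
          simp
        rw [e3]
        have e4 : ∫ z, Real.log (1 - f + f * z) ∂ν
            = ∫ ω, Real.log (1 + f * X m ω) ∂ℙ := by
          rw [hνdef, integral_map (f := fun z : ℝ => Real.log (1 - f + f * z))
            hZmeas.aemeasurable
            (Real.measurable_log.comp (measurable_const.add
              (measurable_const.mul measurable_id))).aestronglyMeasurable]
          apply integral_congr_ae
          apply Filter.Eventually.of_forall
          intro ω
          rw [hZdef]
          ring_nf
        have e5 : ∫ ω, Real.log (1 + f * X m ω) ∂ℙ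
            = ∫ ω, Real.log (1 + f * X 0 ω) ∂ℙ := by
          have hid := (hident m hmn).comp
            (u := fun x : ℝ => Real.log (1 + f * x))
            (Real.measurable_log.comp (measurable_const.add
              (measurable_const.mul measurable_id)))
          exact hid.integral_eq
        rw [e4, e5]
        exact add_le_add_right (hGmem f ⟨hf0, hf1⟩) _
      -- integrate the bound over y
      have hinner_int : Integrable (fun y => ∫ z, P (y, z) ∂ν) ρ := by
        have := hPint.integral_prod_left
        simpa using this
      have hlogY_int : Integrable (fun y => Real.log (1 - K + K * y)) ρ := by
        apply hfm_integrable_of_bdd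
          (Real.measurable_log.comp (measurable_const.add
            (measurable_const.mul measurable_id))).aestronglyMeasurable
          (max (-Real.log (min 1 (C ^ m))) (Real.log (max 1 (D ^ m))))
        filter_upwards [hρbdd] with y hy
        exact hfm_abs_log_comb_le hK.1 hK.2 hCm hy.1 hy.2
      calc ∫ y, ∫ z, P (y, z) ∂ν ∂ρ
          ≤ ∫ y, (Real.log (1 - K + K * y) + G) ∂ρ :=
            integral_mono_ae hinner_int (hlogY_int.add (integrable_const G)) inner_bd
        _ = ∫ y, Real.log (1 - K + K * y) ∂ρ + G := by
            rw [integral_add hlogY_int (integrable_const G)]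
            simp
        _ = ∫ ω, Real.log (1 - K + K * Y ω) ∂ℙ + G := by
            rw [hρdef, integral_map (f := fun y : ℝ => Real.log (1 - K + K * y))
              hYmeas.aemeasurable
              (Real.measurable_log.comp (measurable_const.add
                (measurable_const.mul measurable_id))).aestronglyMeasurable]
        _ ≤ (m : ℝ) * G + G := add_le_add_left ihm G
        _ = ((m + 1 : ℕ) : ℝ) * G := by push_cast; ring
  -- conclude
  apply ciSup_le
  intro K
  have hKint : ∫ ω, Real.log (1 + (K : ℝ) * (∏ k ∈ Finset.range n, (1 + X k ω) - 1)) ∂ℙ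
      = ∫ ω, Real.log (1 - (K : ℝ) + (K : ℝ) * ∏ k ∈ Finset.range n, (1 + X k ω)) ∂ℙ := by
    apply integral_congr_ae
    apply Filter.Eventually.of_forall
    intro ω
    ring_nf
  rw [hKint]
  have hmain := main K K.2 n (le_refl n)
  have hn0 : (0:ℝ) < (n : ℝ) := by exact_mod_cast hn
  calc (1 / (n : ℝ)) * ∫ ω, Real.log (1 - (K:ℝ) + (K:ℝ) * ∏ k ∈ Finset.range n, (1 + X k ω)) ∂ℙ
      ≤ (1 / (n : ℝ)) * ((n : ℝ) * G) := by
        apply mul_le_mul_of_nonneg_left hmain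
        positivity
    _ = G := by field_simp
end

section
/- For every n ≥ 2 and every K ∈ [0,1], the n-period buy-and-hold expected log-growth satisfies g_n(K) ≤ ((n−1)/n)·g_{n−1}* + (1/n)·g_1(K). -/
open MeasureTheory ProbabilityTheory Real

lemma BAH.abs_log_le_max {a b x : ℝ} (ha : 0 < a) (hax : a ≤ x) (hxb : x ≤ b) :
    |Real.log x| ≤ max |Real.log a| |Real.log b| := by
  have hx : 0 < x := lt_of_lt_of_le ha hax
  rcases abs_cases (Real.log x) with ⟨h, _⟩ | ⟨h, _⟩
  · rw [h]
    exact le_max_of_le_right ((Real.log_le_log_iff hx (lt_of_lt_of_le hx hxb)).mpr hxb |>.trans (le_abs_self _))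
  · rw [h]
    have : Real.log a ≤ Real.log x := (Real.log_le_log_iff ha hx).mpr hax
    exact le_max_of_le_left (by linarith [neg_abs_le (Real.log a)])

lemma BAH.denom_pos {K t : ℝ} (hK0 : 0 ≤ K) (hK1 : K ≤ 1) (ht : 0 < t) :
    0 < 1 + K * (t - 1) := by
  rcases le_or_gt t 1 with h | h
  · nlinarith [mul_nonneg (sub_nonneg.2 hK1) (sub_nonneg.2 h)]
  · nlinarith [mul_nonneg hK0 (sub_nonneg.2 h.le)]

lemma BAH.kappa_mem {K t : ℝ} (hK0 : 0 ≤ K) (hK1 : K ≤ 1) (ht : 0 < t) :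
    K * t / (1 + K * (t - 1)) ∈ Set.Icc (0:ℝ) 1 := by
  have hd := BAH.denom_pos hK0 hK1 ht
  constructor
  · positivity
  · rw [div_le_one hd]; nlinarith

lemma BAH.combo_mem {c p a b : ℝ} (hc0 : 0 ≤ c) (hc1 : c ≤ 1) (ha1 : a ≤ 1) (h1b : 1 ≤ b)
    (hap : a ≤ p) (hpb : p ≤ b) :
    a ≤ 1 + c * (p - 1) ∧ 1 + c * (p - 1) ≤ b := by
  constructor <;> nlinarith

/-- abs bound for the combo log. -/
lemma BAH.abs_log_combo_le {c p a b : ℝ} (hc0 : 0 ≤ c) (hc1 : c ≤ 1) (ha : 0 < a) (ha1 : a ≤ 1)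
    (h1b : 1 ≤ b) (hap : a ≤ p) (hpb : p ≤ b) :
    |Real.log (1 + c * (p - 1))| ≤ max |Real.log a| |Real.log b| := by
  obtain ⟨h1, h2⟩ := BAH.combo_mem hc0 hc1 ha1 h1b hap hpb
  exact BAH.abs_log_le_max ha h1 h2

/-- Key algebraic splitting of the log. -/
lemma BAH.key_split {K y p : ℝ} (hK0 : 0 ≤ K) (hK1 : K ≤ 1) (hy : -1 < y) (hp : 0 < p) :
    Real.log (1 + K * (p * (1 + y) - 1))
      = Real.log (1 + K * y)
        + Real.log (1 + (K * (1 + y) / (1 + K * (1 + y - 1))) * (p - 1)) := by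
  have ht : (0:ℝ) < 1 + y := by linarith
  have h1 : 0 < 1 + K * y := by
    have := BAH.denom_pos hK0 hK1 ht
    linarith [this]
  have h2 : 0 < 1 + K * (p * (1 + y) - 1) := by
    have := BAH.denom_pos hK0 hK1 (mul_pos hp ht)
    linarith [this]
  have hne : (1 + K * y) ≠ 0 := ne_of_gt h1
  have key : 1 + K * (p * (1 + y) - 1)
      = (1 + K * y) * (1 + (K * (1 + y) / (1 + K * (1 + y - 1))) * (p - 1)) := by
    have h : (1 + K * (1 + y - 1)) = 1 + K * y := by ring_nf
    rw [h]
    field_simp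
    ring
  have h3 : 0 < 1 + (K * (1 + y) / (1 + K * (1 + y - 1))) * (p - 1) := by
    have h2' := h2
    rw [key] at h2'
    by_contra hcon
    push_neg at hcon
    nlinarith [mul_nonpos_of_nonneg_of_nonpos h1.le hcon]
  rw [key, Real.log_mul hne (ne_of_gt h3)]

/-- For i.i.d. returns `X 0, …, X (n-1)` (with `n ≥ 2`) bounded a.s. in
`[Xmin, Xmax]` where `-1 < Xmin < 0 < Xmax`, and every Kelly fraction
`K ∈ [0,1]`, the `n`-period buy-and-hold expected log-growth
`g_n(K) = (1/n) E[log (1 + K 𝒳_n)]` (with `𝒳_m = ∏_{k<m} (1 + X k) - 1`)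
satisfies `g_n(K) ≤ ((n-1)/n) g_{n-1}* + (1/n) g_1(K)`, where
`g_{n-1}* = sup_{K' ∈ [0,1]} g_{n-1}(K')` and `g_1(K) = E[log (1 + K X 0)]`. -/
theorem buy_and_hold_recursive_bound
    {Ω : Type*} [MeasureSpace Ω] [IsProbabilityMeasure (ℙ : Measure Ω)]
    (n : ℕ) (hn : 2 ≤ n) (X : ℕ → Ω → ℝ)
    (hmeas : ∀ i, Measurable (X i))
    (hindep : iIndepFun (m := fun _ : Fin n => Real.measurableSpace)
      (fun i : Fin n => X i) ℙ)
    (hident : ∀ i < n, IdentDistrib (X i) (X 0) ℙ ℙ)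
    (Xmin Xmax : ℝ) (hXmin : -1 < Xmin) (hXminNeg : Xmin < 0) (hXmaxPos : 0 < Xmax)
    (hbdd : ∀ i < n, ∀ᵐ ω ∂ℙ, X i ω ∈ Set.Icc Xmin Xmax)
    (K : ℝ) (hK : K ∈ Set.Icc (0:ℝ) 1) :
    (1 / (n : ℝ)) *
        ∫ ω, Real.log (1 + K * (∏ k ∈ Finset.range n, (1 + X k ω) - 1)) ∂ℙ
      ≤ (((n : ℝ) - 1) / (n : ℝ)) *
          (⨆ K' : Set.Icc (0:ℝ) 1,
            (1 / ((n : ℝ) - 1)) *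
              ∫ ω, Real.log
                (1 + (K' : ℝ) * (∏ k ∈ Finset.range (n - 1), (1 + X k ω) - 1)) ∂ℙ)
        + (1 / (n : ℝ)) * ∫ ω, Real.log (1 + K * X 0 ω) ∂ℙ := by
  obtain ⟨hK0, hK1⟩ := hK
  set m := n - 1 with hm_def
  have hmn : m < n := by omega
  have hm1 : 1 ≤ m := by omega
  have hmR : ((n : ℝ) - 1) = (m : ℝ) := by
    have h : n = m + 1 := by omega
    rw [h]; push_cast; ring
  have hmpos : (0:ℝ) < (m:ℝ) := by exact_mod_cast hm1
  have hnpos : (0:ℝ) < (n:ℝ) := by positivity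
  rw [hmR]
  -- basic positivity facts
  have hXm0 : (0:ℝ) < 1 + Xmin := by linarith
  have hXm1 : 1 + Xmin ≤ 1 := by linarith
  have hXM1 : (1:ℝ) ≤ 1 + Xmax := by linarith
  set pa : ℝ := (1 + Xmin) ^ m with hpa_def
  set pb : ℝ := (1 + Xmax) ^ m with hpb_def
  have hpa0 : 0 < pa := pow_pos hXm0 m
  have hpa1 : pa ≤ 1 := pow_le_one₀ hXm0.le hXm1
  have hpb1 : (1:ℝ) ≤ pb := one_le_pow₀ hXM1
  set C : ℝ := max |Real.log pa| |Real.log pb| with hC_def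
  -- the random variables
  set P : Ω → ℝ := fun ω => ∏ k ∈ Finset.range m, (1 + X k ω) with hP_def
  set T : Ω → ℝ := fun ω => 1 + X m ω with hT_def
  set κ : ℝ → ℝ := fun t => K * t / (1 + K * (t - 1)) with hκ_def
  set F : ℝ × ℝ → ℝ := fun q => Real.log (1 + κ q.1 * (q.2 - 1)) with hF_def
  have hPmeas : Measurable P := Finset.measurable_prod _ fun k _ => measurable_const.add (hmeas k)
  have hTmeas : Measurable T := measurable_const.add (hmeas m)
  have hκmeas : Measurable κ := by
    apply Measurable.div
    · exact measurable_const.mul measurable_id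
    · exact measurable_const.add (measurable_const.mul (measurable_id.sub measurable_const))
  have hFmeas : Measurable F := by
    apply Real.measurable_log.comp
    exact measurable_const.add (((hκmeas.comp measurable_fst)).mul (measurable_snd.sub measurable_const))
  -- a.e. bounds
  have hball : ∀ᵐ ω ∂ℙ, ∀ i : Fin n, X i ω ∈ Set.Icc Xmin Xmax :=
    ae_all_iff.2 fun i => hbdd i i.2
  have hPae : ∀ᵐ ω ∂ℙ, pa ≤ P ω ∧ P ω ≤ pb := by
    filter_upwards [hball] with ω hω
    constructor
    · calc pa = ∏ _k ∈ Finset.range m, (1 + Xmin) := by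
            rw [Finset.prod_const, Finset.card_range]
        _ ≤ P ω := by
            apply Finset.prod_le_prod (fun k _ => hXm0.le)
            intro k hk
            have := (hω ⟨k, lt_of_lt_of_le (Finset.mem_range.mp hk) hmn.le⟩).1
            simpa using by linarith [this]
    · calc P ω ≤ ∏ _k ∈ Finset.range m, (1 + Xmax) := by
            apply Finset.prod_le_prod
            · intro k hk
              have := (hω ⟨k, lt_of_lt_of_le (Finset.mem_range.mp hk) hmn.le⟩).1
              simp only at this
              linarith
            · intro k hk
              have := (hω ⟨k, lt_of_lt_of_le (Finset.mem_range.mp hk) hmn.le⟩).2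
              simp only at this
              linarith
        _ = pb := by rw [Finset.prod_const, Finset.card_range]
  have hTae : ∀ᵐ ω ∂ℙ, T ω ∈ Set.Icc (1 + Xmin) (1 + Xmax) := by
    filter_upwards [hball] with ω hω
    have := hω ⟨m, hmn⟩
    simp only at this
    exact ⟨by simpa [hT_def] using by linarith [this.1], by simpa [hT_def] using by linarith [this.2]⟩
  -- integrability and sup bound for arbitrary constant fraction
  have hint : ∀ c : ℝ, c ∈ Set.Icc (0:ℝ) 1 →
      Integrable (fun ω => Real.log (1 + c * (P ω - 1))) ℙ ∧
      (∫ ω, Real.log (1 + c * (P ω - 1)) ∂ℙ) ≤ C := by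
    intro c hc
    have hmeas' : Measurable (fun ω => Real.log (1 + c * (P ω - 1))) :=
      Real.measurable_log.comp (measurable_const.add (measurable_const.mul (hPmeas.sub measurable_const)))
    have hbd : ∀ᵐ ω ∂ℙ, ‖Real.log (1 + c * (P ω - 1))‖ ≤ C := by
      filter_upwards [hPae] with ω hω
      rw [Real.norm_eq_abs]
      exact BAH.abs_log_combo_le hc.1 hc.2 hpa0 hpa1 hpb1 hω.1 hω.2
    have hI : Integrable (fun ω => Real.log (1 + c * (P ω - 1))) ℙ :=
      Integrable.mono' (integrable_const C) hmeas'.aestronglyMeasurable hbd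
    refine ⟨hI, ?_⟩
    calc (∫ ω, Real.log (1 + c * (P ω - 1)) ∂ℙ)
        ≤ ∫ _ω, C ∂ℙ := by
          apply integral_mono_ae hI (integrable_const C)
          filter_upwards [hbd] with ω hω
          exact le_trans (le_abs_self _) (by rwa [Real.norm_eq_abs] at hω)
      _ = C := by simp
  -- the supremum
  set G : ℝ := ⨆ K' : Set.Icc (0:ℝ) 1,
      (1 / (m : ℝ)) *
        ∫ ω, Real.log (1 + (K' : ℝ) * (∏ k ∈ Finset.range m, (1 + X k ω) - 1)) ∂ℙ with hG_def
  have hGbdd : BddAbove (Set.range fun K' : Set.Icc (0:ℝ) 1 =>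
      (1 / (m : ℝ)) *
        ∫ ω, Real.log (1 + (K' : ℝ) * (∏ k ∈ Finset.range m, (1 + X k ω) - 1)) ∂ℙ) := by
    refine ⟨(1 / (m : ℝ)) * C, ?_⟩
    rintro x ⟨K', rfl⟩
    exact mul_le_mul_of_nonneg_left (hint K' K'.2).2 (by positivity)
  have hsup_le : ∀ c : ℝ, c ∈ Set.Icc (0:ℝ) 1 →
      (∫ ω, Real.log (1 + c * (P ω - 1)) ∂ℙ) ≤ (m : ℝ) * G := by
    intro c hc
    have h : (1 / (m : ℝ)) * ∫ ω, Real.log (1 + c * (P ω - 1)) ∂ℙ ≤ G :=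
      le_ciSup hGbdd (⟨c, hc⟩ : Set.Icc (0:ℝ) 1)
    have h2 := mul_le_mul_of_nonneg_left h hmpos.le
    calc (∫ ω, Real.log (1 + c * (P ω - 1)) ∂ℙ)
        = (m : ℝ) * ((1 / (m : ℝ)) * ∫ ω, Real.log (1 + c * (P ω - 1)) ∂ℙ) := by
          field_simp
      _ ≤ (m : ℝ) * G := h2
  -- independence of P and T
  have hfn : iIndepFun (m := fun _ : Fin n => Real.measurableSpace)
      (fun i : Fin n => (fun x => 1 + x) ∘ X (i : ℕ)) ℙ :=
    hindep.comp (fun _ => fun x => 1 + x) (fun _ => measurable_const.add measurable_id)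
  set s : Finset (Fin n) := Finset.univ.map (Fin.castLEEmb hmn.le) with hs_def
  have hi0 : (⟨m, hmn⟩ : Fin n) ∉ s := by
    intro h
    rw [hs_def, Finset.mem_map] at h
    obtain ⟨i, _, hi⟩ := h
    have h2 : (i : ℕ) = m := by
      have := congrArg Fin.val hi
      simpa using this
    have := i.isLt
    omega
  have hindPT := hfn.indepFun_finset_prod_of_notMem
    (fun i => (measurable_const.add measurable_id).comp (hmeas i)) hi0
  have hprod_eq : (∏ j ∈ s, ((fun x => 1 + x) ∘ X (j : ℕ))) = P := by
    funext ω
    rw [Finset.prod_apply]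
    show (∏ j ∈ s, (1 + X (j : ℕ) ω)) = ∏ k ∈ Finset.range m, (1 + X k ω)
    rw [hs_def, Finset.prod_map, ← Fin.prod_univ_eq_prod_range (fun k => 1 + X k ω) m]
    apply Finset.prod_congr rfl
    intro i _
    simp [Fin.castLEEmb, Fin.castLE]
  have hindTP : IndepFun T P ℙ := by
    have h := hindPT.symm
    rw [hprod_eq] at h
    exact h
  set μT := Measure.map T (ℙ : Measure Ω) with hμT
  set μP := Measure.map P (ℙ : Measure Ω) with hμP
  haveI : IsProbabilityMeasure μT := Measure.isProbabilityMeasure_map hTmeas.aemeasurable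
  haveI : IsProbabilityMeasure μP := Measure.isProbabilityMeasure_map hPmeas.aemeasurable
  have hmap : Measure.map (fun ω => (T ω, P ω)) (ℙ : Measure Ω) = μT.prod μP :=
    (indepFun_iff_map_prod_eq_prod_map_map hTmeas.aemeasurable hPmeas.aemeasurable).mp hindTP
  have hTaeμ : ∀ᵐ t ∂μT, t ∈ Set.Icc (1 + Xmin) (1 + Xmax) :=
    (ae_map_iff hTmeas.aemeasurable measurableSet_Icc).mpr hTae
  have hPaeμ : ∀ᵐ p ∂μP, p ∈ Set.Icc pa pb := by
    apply (ae_map_iff hPmeas.aemeasurable measurableSet_Icc).mpr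
    filter_upwards [hPae] with ω h
    exact ⟨h.1, h.2⟩
  have hprod_ae : ∀ᵐ q ∂(μT.prod μP),
      q ∈ (Set.Icc (1 + Xmin) (1 + Xmax)) ×ˢ (Set.Icc pa pb) := by
    apply (Measure.ae_prod_mem_iff_ae_ae_mem (measurableSet_Icc.prod measurableSet_Icc)).mpr
    filter_upwards [hTaeμ] with t ht
    filter_upwards [hPaeμ] with p hp
    exact ⟨ht, hp⟩
  have hFbd : ∀ᵐ q ∂(μT.prod μP), ‖F q‖ ≤ C := by
    filter_upwards [hprod_ae] with q hq
    obtain ⟨⟨ht1, ht2⟩, hp1, hp2⟩ := hq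
    have ht0 : 0 < q.1 := lt_of_lt_of_le hXm0 ht1
    have hκq := BAH.kappa_mem hK0 hK1 ht0
    rw [Real.norm_eq_abs]
    exact BAH.abs_log_combo_le hκq.1 hκq.2 hpa0 hpa1 hpb1 hp1 hp2
  have hFint : Integrable F (μT.prod μP) :=
    Integrable.mono' (integrable_const C) hFmeas.aestronglyMeasurable hFbd
  have hB_meas : Measurable (fun ω => F (T ω, P ω)) := hFmeas.comp (hTmeas.prodMk hPmeas)
  have hB_int : Integrable (fun ω => F (T ω, P ω)) ℙ := by
    apply Integrable.mono' (integrable_const C) hB_meas.aestronglyMeasurable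
    filter_upwards [hTae, hPae] with ω h1 h2
    have ht0 : 0 < T ω := lt_of_lt_of_le hXm0 h1.1
    have hκq := BAH.kappa_mem hK0 hK1 ht0
    rw [Real.norm_eq_abs]
    exact BAH.abs_log_combo_le hκq.1 hκq.2 hpa0 hpa1 hpb1 h2.1 h2.2
  have hB_eq : ∫ ω, F (T ω, P ω) ∂ℙ = ∫ q, F q ∂(μT.prod μP) := by
    have h := integral_map (μ := ℙ) (hTmeas.prodMk hPmeas).aemeasurable
      (f := F) hFmeas.aestronglyMeasurable
    rw [hmap] at h
    exact h.symm
  have hfub : ∫ q, F q ∂(μT.prod μP) = ∫ t, ∫ p, F (t, p) ∂μP ∂μT := integral_prod F hFint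
  have hinner : ∀ᵐ t ∂μT, (∫ p, F (t, p) ∂μP) ≤ (m : ℝ) * G := by
    filter_upwards [hTaeμ] with t ht
    have ht0 : 0 < t := lt_of_lt_of_le hXm0 ht.1
    have hκt := BAH.kappa_mem hK0 hK1 ht0
    have h1 : ∫ p, F (t, p) ∂μP = ∫ ω, Real.log (1 + κ t * (P ω - 1)) ∂ℙ := by
      rw [hμP]
      exact integral_map hPmeas.aemeasurable
        ((hFmeas.comp (measurable_const.prodMk measurable_id)).aestronglyMeasurable)
    rw [h1]
    exact hsup_le (κ t) hκt
  have hD : ∫ ω, F (T ω, P ω) ∂ℙ ≤ (m : ℝ) * G := by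
    rw [hB_eq, hfub]
    calc ∫ t, ∫ p, F (t, p) ∂μP ∂μT ≤ ∫ _t, (m : ℝ) * G ∂μT :=
        integral_mono_ae hFint.integral_prod_left (integrable_const _) hinner
      _ = (m : ℝ) * G := by simp
  -- the first log term
  have hA_meas : Measurable (fun ω => Real.log (1 + K * X m ω)) :=
    Real.measurable_log.comp (measurable_const.add (measurable_const.mul (hmeas m)))
  have hA_int : Integrable (fun ω => Real.log (1 + K * X m ω)) ℙ := by
    apply Integrable.mono' (integrable_const (max |Real.log (1 + Xmin)| |Real.log (1 + Xmax)|))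
      hA_meas.aestronglyMeasurable
    filter_upwards [hball] with ω hω
    have h := hω ⟨m, hmn⟩
    simp only at h
    rw [Real.norm_eq_abs]
    have he : (1 : ℝ) + K * X m ω = 1 + K * ((1 + X m ω) - 1) := by ring
    rw [he]
    exact BAH.abs_log_combo_le hK0 hK1 hXm0 hXm1 hXM1 (by linarith [h.1]) (by linarith [h.2])
  have hA_eq : ∫ ω, Real.log (1 + K * X m ω) ∂ℙ = ∫ ω, Real.log (1 + K * X 0 ω) ∂ℙ := by
    have hcomp := (hident m hmn).comp (u := fun x => Real.log (1 + K * x))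
      (Real.measurable_log.comp (measurable_const.add (measurable_const.mul measurable_id)))
    exact hcomp.integral_eq
  -- pointwise a.e. split
  have hsplit : ∀ᵐ ω ∂ℙ, Real.log (1 + K * (∏ k ∈ Finset.range n, (1 + X k ω) - 1))
      = Real.log (1 + K * X m ω) + F (T ω, P ω) := by
    filter_upwards [hball, hPae] with ω hω hP
    have hXmem := hω ⟨m, hmn⟩
    simp only at hXmem
    have hy : -1 < X m ω := by linarith [hXmem.1]
    have hp : 0 < P ω := lt_of_lt_of_le hpa0 hP.1
    have hprod : ∏ k ∈ Finset.range n, (1 + X k ω) = P ω * (1 + X m ω) := by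
      have hnm : n = m + 1 := by omega
      rw [hnm, Finset.prod_range_succ]
    rw [hprod]
    exact BAH.key_split hK0 hK1 hy hp
  have hmain : (∫ ω, Real.log (1 + K * (∏ k ∈ Finset.range n, (1 + X k ω) - 1)) ∂ℙ)
      ≤ (m : ℝ) * G + ∫ ω, Real.log (1 + K * X 0 ω) ∂ℙ := by
    rw [integral_congr_ae hsplit, integral_add hA_int hB_int, ← hA_eq]
    linarith [hD]
  calc (1 / (n : ℝ)) * ∫ ω, Real.log (1 + K * (∏ k ∈ Finset.range n, (1 + X k ω) - 1)) ∂ℙ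
      ≤ (1 / (n : ℝ)) * ((m : ℝ) * G + ∫ ω, Real.log (1 + K * X 0 ω) ∂ℙ) :=
        mul_le_mul_of_nonneg_left hmain (by positivity)
    _ = ((m : ℝ) / (n : ℝ)) * G + (1 / (n : ℝ)) * ∫ ω, Real.log (1 + K * X 0 ω) ∂ℙ := by ring
end

section
/- For every m ≥ 2, the optimal expected log-growths satisfy the recursive bound g_m* ≤ ((m−1)/m)·g_{m−1}* + (1/m)·g_1*. -/
open MeasureTheory ProbabilityTheory Real

private lemma aux_pos {K x : ℝ} (hK0 : 0 ≤ K) (hK1 : K ≤ 1) (hx : -1 < x) :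
    0 < 1 + K * x := by
  rcases eq_or_lt_of_le hK1 with h | h
  · subst h; linarith
  · nlinarith [mul_nonneg hK0 (by linarith : (0:ℝ) ≤ 1 + x)]

private lemma aux_pos2 {K a x : ℝ} (hK0 : 0 ≤ K) (hK1 : K ≤ 1) (ha : 0 < a) (hx : -1 < x) :
    0 < 1 + K * (a * (1 + x) - 1) := by
  rcases eq_or_lt_of_le hK1 with h | h
  · subst h; nlinarith
  · nlinarith [mul_nonneg hK0 (mul_pos ha (by linarith : (0:ℝ) < 1 + x)).le]

private lemma key_log_split {K a x : ℝ} (hK0 : 0 ≤ K) (hK1 : K ≤ 1) (ha : 0 < a) (hx : -1 < x) :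
    Real.log (1 + K * (a * (1 + x) - 1)) =
      Real.log (1 + K * x) + Real.log (1 + K * (1 + x) / (1 + K * x) * (a - 1)) := by
  have hd : 0 < 1 + K * x := aux_pos hK0 hK1 hx
  have h2 : (1 + K * x) * (1 + K * (1 + x) / (1 + K * x) * (a - 1)) = 1 + K * (a * (1 + x) - 1) := by
    field_simp; ring
  have h3 : 0 < 1 + K * (a * (1 + x) - 1) := aux_pos2 hK0 hK1 ha hx
  have he : 0 < 1 + K * (1 + x) / (1 + K * x) * (a - 1) := by nlinarith [h2 ▸ h3]
  rw [← h2, Real.log_mul (ne_of_gt hd) (ne_of_gt he)]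

private lemma comb_lb {c a lo : ℝ} (hc0 : 0 ≤ c) (hc1 : c ≤ 1) (hlo : lo ≤ a) :
    min 1 lo ≤ 1 + c * (a - 1) := by
  nlinarith [min_le_left (1:ℝ) lo, min_le_right (1:ℝ) lo,
    mul_le_mul_of_nonneg_left hlo hc0]

private lemma comb_ub {c a hi : ℝ} (hc0 : 0 ≤ c) (hc1 : c ≤ 1) (hhi : a ≤ hi) :
    1 + c * (a - 1) ≤ max 1 hi := by
  nlinarith [le_max_left (1:ℝ) hi, le_max_right (1:ℝ) hi,
    mul_le_mul_of_nonneg_left hhi hc0]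

private lemma log_abs_bound {c a lo hi : ℝ} (h0lo : 0 < lo) (hc0 : 0 ≤ c) (hc1 : c ≤ 1)
    (hlo : lo ≤ a) (hhi : a ≤ hi) :
    |Real.log (1 + c * (a - 1))| ≤ max |Real.log (min 1 lo)| |Real.log (max 1 hi)| := by
  have h1 : 0 < min 1 lo := lt_min one_pos h0lo
  have hL := comb_lb hc0 hc1 hlo
  have hU := comb_ub hc0 hc1 hhi
  rw [abs_le]
  constructor
  · have := Real.log_le_log h1 hL
    have h2 : -|Real.log (min 1 lo)| ≤ Real.log (min 1 lo) := neg_abs_le _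
    have h3 : |Real.log (min 1 lo)| ≤ max |Real.log (min 1 lo)| |Real.log (max 1 hi)| :=
      le_max_left _ _
    linarith
  · have := Real.log_le_log (lt_of_lt_of_le h1 hL) hU
    have h2 : Real.log (max 1 hi) ≤ |Real.log (max 1 hi)| := le_abs_self _
    have h3 : |Real.log (max 1 hi)| ≤ max |Real.log (min 1 lo)| |Real.log (max 1 hi)| :=
      le_max_right _ _
    linarith

private lemma main_est {Ω : Type*} [MeasureSpace Ω] [IsProbabilityMeasure (ℙ : Measure Ω)]
    (A B : Ω → ℝ) (hA : Measurable A) (hB : Measurable B) (hind : IndepFun B A ℙ)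
    (Xmin Xmax lo hi : ℝ) (hXmin : -1 < Xmin) (hlo : 0 < lo)
    (haeB : ∀ᵐ ω ∂ℙ, B ω ∈ Set.Icc Xmin Xmax) (haeA : ∀ᵐ ω ∂ℙ, A ω ∈ Set.Icc lo hi)
    (K : ℝ) (hK0 : 0 ≤ K) (hK1 : K ≤ 1) :
    ∫ ω, Real.log (1 + K * (A ω * (1 + B ω) - 1)) ∂ℙ
      ≤ (⨆ c : Set.Icc (0:ℝ) 1, ∫ ω, Real.log (1 + (c : ℝ) * (A ω - 1)) ∂ℙ)
        + ∫ ω, Real.log (1 + K * B ω) ∂ℙ := by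
  set C : ℝ := max |Real.log (min 1 lo)| |Real.log (max 1 hi)| with hC
  set k' : ℝ → ℝ := fun x => K * (1 + x) / (1 + K * x) with hk'
  have hk'meas : Measurable k' :=
    (measurable_const.mul (measurable_const.add measurable_id)).div
      (measurable_const.add (measurable_const.mul measurable_id))
  have hk'mem : ∀ x, -1 < x → k' x ∈ Set.Icc (0:ℝ) 1 := by
    intro x hx
    have hd : 0 < 1 + K * x := aux_pos hK0 hK1 hx
    constructor
    · exact div_nonneg (mul_nonneg hK0 (by linarith)) hd.le
    · rw [div_le_one hd]; nlinarith
  set φ : ℝ × ℝ → ℝ := fun q => Real.log (1 + k' q.1 * (q.2 - 1)) with hφ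
  have hφmeas : Measurable φ :=
    Real.measurable_log.comp
      (measurable_const.add ((hk'meas.comp measurable_fst).mul
        (measurable_snd.sub measurable_const)))
  have hsplit : ∀ᵐ ω ∂ℙ, Real.log (1 + K * (A ω * (1 + B ω) - 1))
      = Real.log (1 + K * B ω) + φ (B ω, A ω) := by
    filter_upwards [haeA, haeB] with ω hA' hB'
    exact key_log_split hK0 hK1 (lt_of_lt_of_le hlo hA'.1) (lt_of_lt_of_le hXmin hB'.1)
  have hb1 : ∀ᵐ ω ∂ℙ, ‖Real.log (1 + K * B ω)‖
      ≤ max |Real.log (min 1 (1 + Xmin))| |Real.log (max 1 (1 + Xmax))| := by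
    filter_upwards [haeB] with ω h
    have h1 : (1 : ℝ) + K * B ω = 1 + K * ((1 + B ω) - 1) := by ring
    rw [Real.norm_eq_abs, h1]
    exact log_abs_bound (by linarith) hK0 hK1 (by linarith [h.1]) (by linarith [h.2])
  have hint1 : Integrable (fun ω => Real.log (1 + K * B ω)) ℙ :=
    Integrable.mono' (integrable_const _)
      (Real.measurable_log.comp (measurable_const.add (measurable_const.mul hB))).aestronglyMeasurable
      hb1
  have hb2 : ∀ᵐ ω ∂ℙ, ‖φ (B ω, A ω)‖ ≤ C := by
    filter_upwards [haeA, haeB] with ω hA' hB'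
    have hm := hk'mem (B ω) (lt_of_lt_of_le hXmin hB'.1)
    rw [Real.norm_eq_abs]
    exact log_abs_bound hlo hm.1 hm.2 hA'.1 hA'.2
  have hmeas_comp : Measurable fun ω => φ (B ω, A ω) := hφmeas.comp (hB.prodMk hA)
  have hint2 : Integrable (fun ω => φ (B ω, A ω)) ℙ :=
    Integrable.mono' (integrable_const C) hmeas_comp.aestronglyMeasurable hb2
  have step1 : ∫ ω, Real.log (1 + K * (A ω * (1 + B ω) - 1)) ∂ℙ
      = ∫ ω, Real.log (1 + K * B ω) ∂ℙ + ∫ ω, φ (B ω, A ω) ∂ℙ := by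
    rw [integral_congr_ae hsplit, integral_add hint1 hint2]
  have hintc : ∀ c : ℝ, 0 ≤ c → c ≤ 1 →
      Integrable (fun ω => Real.log (1 + c * (A ω - 1))) ℙ := by
    intro c hc0 hc1
    refine Integrable.mono' (integrable_const C)
      (Real.measurable_log.comp
        (measurable_const.add (measurable_const.mul (hA.sub measurable_const)))).aestronglyMeasurable ?_
    filter_upwards [haeA] with ω h
    rw [Real.norm_eq_abs]
    exact log_abs_bound hlo hc0 hc1 h.1 h.2
  have hbdd2 : BddAbove (Set.range fun c : Set.Icc (0:ℝ) 1 =>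
      ∫ ω, Real.log (1 + (c : ℝ) * (A ω - 1)) ∂ℙ) := by
    refine ⟨C, ?_⟩
    rintro _ ⟨c, rfl⟩
    have hb : ∀ᵐ ω ∂ℙ, Real.log (1 + (c : ℝ) * (A ω - 1)) ≤ C := by
      filter_upwards [haeA] with ω h
      exact le_trans (le_abs_self _) (log_abs_bound hlo c.2.1 c.2.2 h.1 h.2)
    calc ∫ ω, Real.log (1 + (c : ℝ) * (A ω - 1)) ∂ℙ
        ≤ ∫ _, C ∂ℙ := integral_mono_ae (hintc c c.2.1 c.2.2) (integrable_const C) hb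
      _ = C := by simp
  have hpair : AEMeasurable (fun ω => (B ω, A ω)) ℙ := (hB.prodMk hA).aemeasurable
  have hmap : (ℙ : Measure Ω).map (fun ω => (B ω, A ω)) = ((ℙ : Measure Ω).map B).prod ((ℙ : Measure Ω).map A) :=
    (indepFun_iff_map_prod_eq_prod_map_map hB.aemeasurable hA.aemeasurable).1 hind
  haveI : IsProbabilityMeasure ((ℙ : Measure Ω).map B) := Measure.isProbabilityMeasure_map hB.aemeasurable
  haveI : IsProbabilityMeasure ((ℙ : Measure Ω).map A) := Measure.isProbabilityMeasure_map hA.aemeasurable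
  have hφint : Integrable φ (((ℙ : Measure Ω).map B).prod ((ℙ : Measure Ω).map A)) := by
    rw [← hmap]
    exact (integrable_map_measure hφmeas.aestronglyMeasurable hpair).2 hint2
  have e_map : ∫ ω, φ (B ω, A ω) ∂ℙ = ∫ q, φ q ∂(((ℙ : Measure Ω).map B).prod ((ℙ : Measure Ω).map A)) := by
    rw [← hmap, integral_map hpair hφmeas.aestronglyMeasurable]
  have e_prod : ∫ q, φ q ∂(((ℙ : Measure Ω).map B).prod ((ℙ : Measure Ω).map A))
      = ∫ x, ∫ a, φ (x, a) ∂((ℙ : Measure Ω).map A) ∂((ℙ : Measure Ω).map B) := integral_prod φ hφint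
  set S := ⨆ c : Set.Icc (0:ℝ) 1, ∫ ω, Real.log (1 + (c : ℝ) * (A ω - 1)) ∂ℙ with hS
  have haeBx : ∀ᵐ x ∂((ℙ : Measure Ω).map B), x ∈ Set.Icc Xmin Xmax :=
    (ae_map_iff hB.aemeasurable measurableSet_Icc).2 haeB
  have hinner_le : ∀ᵐ x ∂((ℙ : Measure Ω).map B), (∫ a, φ (x, a) ∂((ℙ : Measure Ω).map A)) ≤ S := by
    filter_upwards [haeBx] with x hx
    have hm := hk'mem x (lt_of_lt_of_le hXmin hx.1)
    have hfm : Measurable fun a : ℝ => Real.log (1 + k' x * (a - 1)) :=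
      Real.measurable_log.comp
        (measurable_const.add (measurable_const.mul (measurable_id.sub measurable_const)))
    have heq : (∫ a, φ (x, a) ∂((ℙ : Measure Ω).map A)) = ∫ ω, Real.log (1 + k' x * (A ω - 1)) ∂ℙ :=
      integral_map hA.aemeasurable hfm.aestronglyMeasurable
    rw [heq]
    exact le_ciSup hbdd2 (⟨k' x, hm⟩ : Set.Icc (0:ℝ) 1)
  have hinner_int : Integrable (fun x => ∫ a, φ (x, a) ∂((ℙ : Measure Ω).map A)) ((ℙ : Measure Ω).map B) :=
    hφint.integral_prod_left
  have e3 : ∫ ω, φ (B ω, A ω) ∂ℙ ≤ S := by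
    rw [e_map, e_prod]
    calc ∫ x, ∫ a, φ (x, a) ∂((ℙ : Measure Ω).map A) ∂((ℙ : Measure Ω).map B)
        ≤ ∫ _, S ∂((ℙ : Measure Ω).map B) := integral_mono_ae hinner_int (integrable_const S) hinner_le
      _ = S := by simp
  linarith [step1, e3]

/-- For i.i.d. returns `X 0, …, X (n-1)` bounded a.s. in `[Xmin, Xmax]` where
`-1 < Xmin < 0 < Xmax`, and every `m` with `2 ≤ m ≤ n`, the optimal expected
log-growths `g_m* = sup_{K ∈ [0,1]} (1/m) E[log (1 + K 𝒳_m)]` (with compound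
return `𝒳_m = ∏_{k<m} (1 + X k) - 1`) satisfy the recursive bound
`g_m* ≤ ((m-1)/m) g_{m-1}* + (1/m) g_1*`, where
`g_1* = sup_{K ∈ [0,1]} E[log (1 + K X 0)]`. -/
theorem optimal_growth_recursive_bound
    {Ω : Type*} [MeasureSpace Ω] [IsProbabilityMeasure (ℙ : Measure Ω)]
    (n : ℕ) (hn : 1 ≤ n) (X : ℕ → Ω → ℝ)
    (hmeas : ∀ i, Measurable (X i))
    (hindep : iIndepFun
      (fun i : Fin n => X i) ℙ)
    (hident : ∀ i < n, IdentDistrib (X i) (X 0) ℙ ℙ)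
    (Xmin Xmax : ℝ) (hXmin : -1 < Xmin) (hXminNeg : Xmin < 0) (hXmaxPos : 0 < Xmax)
    (hbdd : ∀ i < n, ∀ᵐ ω ∂ℙ, X i ω ∈ Set.Icc Xmin Xmax)
    (m : ℕ) (hm : 2 ≤ m) (hmn : m ≤ n) :
    (⨆ K : Set.Icc (0:ℝ) 1,
        (1 / (m : ℝ)) *
          ∫ ω, Real.log (1 + (K : ℝ) * (∏ k ∈ Finset.range m, (1 + X k ω) - 1)) ∂ℙ)
      ≤ (((m : ℝ) - 1) / (m : ℝ)) *
          (⨆ K : Set.Icc (0:ℝ) 1,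
            (1 / ((m : ℝ) - 1)) *
              ∫ ω, Real.log
                (1 + (K : ℝ) * (∏ k ∈ Finset.range (m - 1), (1 + X k ω) - 1)) ∂ℙ)
        + (1 / (m : ℝ)) *
            (⨆ K : Set.Icc (0:ℝ) 1, ∫ ω, Real.log (1 + (K : ℝ) * X 0 ω) ∂ℙ) := by
  obtain ⟨p, rfl⟩ : ∃ p, m = p + 1 := ⟨m - 1, by omega⟩
  have hp1 : 1 ≤ p := by omega
  have hpn : p < n := by omega
  have hpR : (0:ℝ) < (p:ℝ) := by exact_mod_cast hp1
  haveI : Nonempty (Set.Icc (0:ℝ) 1) := ⟨⟨0, by norm_num⟩⟩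
  simp only [Nat.add_sub_cancel]
  push_cast
  simp only [add_sub_cancel_right]
  -- a.e. bounds
  have hae : ∀ᵐ ω ∂ℙ, ∀ k, k < n → X k ω ∈ Set.Icc Xmin Xmax := by
    rw [ae_all_iff]
    intro k
    by_cases hk : k < n
    · filter_upwards [hbdd k hk] with ω h _; exact h
    · filter_upwards with ω h; exact absurd h hk
  have hXm1 : (0:ℝ) < 1 + Xmin := by linarith
  have haeA : ∀ᵐ ω ∂ℙ, (∏ k ∈ Finset.range p, (1 + X k ω)) ∈
      Set.Icc ((1 + Xmin) ^ p) ((1 + Xmax) ^ p) := by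
    filter_upwards [hae] with ω h
    constructor
    · calc (1 + Xmin) ^ p = ∏ _k ∈ Finset.range p, (1 + Xmin) := by
            rw [Finset.prod_const, Finset.card_range]
        _ ≤ ∏ k ∈ Finset.range p, (1 + X k ω) := by
            refine Finset.prod_le_prod (fun i _ => by linarith) (fun i hi => ?_)
            have := (h i (by have := Finset.mem_range.1 hi; omega)).1
            linarith
    · calc ∏ k ∈ Finset.range p, (1 + X k ω)
          ≤ ∏ _k ∈ Finset.range p, (1 + Xmax) := by
            refine Finset.prod_le_prod (fun i hi => ?_) (fun i hi => ?_)
            · have := (h i (by have := Finset.mem_range.1 hi; omega)).1; linarith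
            · have := (h i (by have := Finset.mem_range.1 hi; omega)).2; linarith
        _ = (1 + Xmax) ^ p := by rw [Finset.prod_const, Finset.card_range]
  have haeB : ∀ᵐ ω ∂ℙ, X p ω ∈ Set.Icc Xmin Xmax := hbdd p (by omega)
  -- measurability
  have hAmeas : Measurable fun ω => ∏ k ∈ Finset.range p, (1 + X k ω) :=
    Finset.measurable_prod _ (fun k _ => measurable_const.add (hmeas k))
  -- independence
  have hfam : iIndepFun
      (fun i : Fin n => fun ω => 1 + X (i : ℕ) ω) ℙ :=
    hindep.comp (fun _ : Fin n => fun x : ℝ => 1 + x)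
      (fun _ => measurable_const.add measurable_id)
  have hi₀ : (⟨p, hpn⟩ : Fin n) ∉ Finset.univ.filter (fun j : Fin n => (j : ℕ) < p) := by
    simp
  have h1 : IndepFun
      (∏ j ∈ Finset.univ.filter (fun j : Fin n => (j : ℕ) < p), fun ω => 1 + X (j : ℕ) ω)
      (fun ω => 1 + X p ω) ℙ :=
    hfam.indepFun_finsetProd_of_notMem
      (fun i => measurable_const.add (hmeas _)) hi₀
  have hprod : (∏ j ∈ Finset.univ.filter (fun j : Fin n => (j : ℕ) < p),
      fun ω => 1 + X (j : ℕ) ω) = fun ω => ∏ k ∈ Finset.range p, (1 + X k ω) := by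
    funext ω
    rw [Finset.prod_apply]
    refine Finset.prod_bij (fun (j : Fin n) _ => (j : ℕ)) ?_ ?_ ?_ ?_
    · intro a ha
      simp only [Finset.mem_filter, Finset.mem_univ, true_and] at ha
      exact Finset.mem_range.2 ha
    · intro a _ b _ hab
      exact Fin.val_injective hab
    · intro k hk
      have hk' := Finset.mem_range.1 hk
      exact ⟨⟨k, by omega⟩, by simp [hk'], rfl⟩
    · intro a _; rfl
  rw [hprod] at h1
  have hBA : IndepFun (fun ω => X p ω) (fun ω => ∏ k ∈ Finset.range p, (1 + X k ω)) ℙ := by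
    have h2 := h1.comp (φ := (id : ℝ → ℝ)) (ψ := fun y : ℝ => y - 1) measurable_id
      (measurable_id.sub measurable_const)
    simp only [Function.id_comp] at h2
    have h3 : ((fun y : ℝ => y - 1) ∘ fun ω => 1 + X p ω) = fun ω => X p ω := by
      funext ω; simp
    rw [h3] at h2
    exact h2.symm
  -- sup bounds for g1
  have hbdd1 : BddAbove (Set.range fun c : Set.Icc (0:ℝ) 1 =>
      ∫ ω, Real.log (1 + (c : ℝ) * X 0 ω) ∂ℙ) := by
    refine ⟨max |Real.log (min 1 (1 + Xmin))| |Real.log (max 1 (1 + Xmax))|, ?_⟩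
    rintro _ ⟨c, rfl⟩
    have hintc : Integrable (fun ω => Real.log (1 + (c : ℝ) * X 0 ω)) ℙ := by
      refine Integrable.mono'
        (integrable_const (max |Real.log (min 1 (1 + Xmin))| |Real.log (max 1 (1 + Xmax))|))
        (Real.measurable_log.comp
          (measurable_const.add (measurable_const.mul (hmeas 0)))).aestronglyMeasurable ?_
      filter_upwards [hbdd 0 (by omega)] with ω h
      have h1 : (1 : ℝ) + (c : ℝ) * X 0 ω = 1 + (c : ℝ) * ((1 + X 0 ω) - 1) := by ring
      rw [Real.norm_eq_abs, h1]
      exact log_abs_bound hXm1 c.2.1 c.2.2 (by linarith [h.1]) (by linarith [h.2])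
    have hb : ∀ᵐ ω ∂ℙ, Real.log (1 + (c : ℝ) * X 0 ω)
        ≤ max |Real.log (min 1 (1 + Xmin))| |Real.log (max 1 (1 + Xmax))| := by
      filter_upwards [hbdd 0 (by omega)] with ω h
      have h1 : (1 : ℝ) + (c : ℝ) * X 0 ω = 1 + (c : ℝ) * ((1 + X 0 ω) - 1) := by ring
      rw [h1]
      exact le_trans (le_abs_self _)
        (log_abs_bound hXm1 c.2.1 c.2.2 (by linarith [h.1]) (by linarith [h.2]))
    calc ∫ ω, Real.log (1 + (c : ℝ) * X 0 ω) ∂ℙ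
        ≤ ∫ _, max |Real.log (min 1 (1 + Xmin))| |Real.log (max 1 (1 + Xmax))| ∂ℙ :=
          integral_mono_ae hintc (integrable_const _) hb
      _ = _ := by simp
  -- named sups
  set S2 : ℝ := ⨆ c : Set.Icc (0:ℝ) 1,
    ∫ ω, Real.log (1 + (c : ℝ) * (∏ k ∈ Finset.range p, (1 + X k ω) - 1)) ∂ℙ with hS2
  set S1 : ℝ := ⨆ c : Set.Icc (0:ℝ) 1, ∫ ω, Real.log (1 + (c : ℝ) * X 0 ω) ∂ℙ with hS1
  -- key per-K bound
  have key : ∀ K : Set.Icc (0:ℝ) 1,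
      (∫ ω, Real.log (1 + (K : ℝ) * (∏ k ∈ Finset.range (p + 1), (1 + X k ω) - 1)) ∂ℙ)
        ≤ S2 + S1 := by
    intro K
    have e0 : (∫ ω, Real.log (1 + (K : ℝ) * (∏ k ∈ Finset.range (p + 1), (1 + X k ω) - 1)) ∂ℙ)
        = ∫ ω, Real.log (1 + (K : ℝ) *
            ((∏ k ∈ Finset.range p, (1 + X k ω)) * (1 + X p ω) - 1)) ∂ℙ := by
      simp only [Finset.prod_range_succ]
    rw [e0]
    have hmain := main_est (fun ω => ∏ k ∈ Finset.range p, (1 + X k ω)) (X p)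
      hAmeas (hmeas p) hBA Xmin Xmax ((1 + Xmin) ^ p) ((1 + Xmax) ^ p)
      hXmin (by positivity) haeB haeA (K : ℝ) K.2.1 K.2.2
    refine le_trans hmain ?_
    have h1 : ∫ ω, Real.log (1 + (K : ℝ) * X p ω) ∂ℙ
        = ∫ ω, Real.log (1 + (K : ℝ) * X 0 ω) ∂ℙ := by
      have hg : Measurable fun x : ℝ => Real.log (1 + (K : ℝ) * x) :=
        Real.measurable_log.comp (measurable_const.add (measurable_const.mul measurable_id))
      exact ((hident p (by omega)).comp hg).integral_eq
    have h2 : ∫ ω, Real.log (1 + (K : ℝ) * X 0 ω) ∂ℙ ≤ S1 := le_ciSup hbdd1 K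
    have h3 : (⨆ c : Set.Icc (0:ℝ) 1,
        ∫ ω, Real.log (1 + (c : ℝ) * ((∏ k ∈ Finset.range p, (1 + X k ω)) - 1)) ∂ℙ) = S2 := rfl
    rw [h3, h1]
    linarith
  -- assemble
  calc (⨆ K : Set.Icc (0:ℝ) 1, 1 / ((p : ℝ) + 1) *
        ∫ ω, Real.log (1 + (K : ℝ) * (∏ k ∈ Finset.range (p + 1), (1 + X k ω) - 1)) ∂ℙ)
      ≤ 1 / ((p : ℝ) + 1) * (S2 + S1) := by
        refine ciSup_le fun K => ?_
        exact mul_le_mul_of_nonneg_left (key K) (by positivity)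
    _ = (p : ℝ) / ((p : ℝ) + 1) * (1 / (p : ℝ) * S2) + 1 / ((p : ℝ) + 1) * S1 := by
        field_simp
    _ = (p : ℝ) / ((p : ℝ) + 1) * (⨆ K : Set.Icc (0:ℝ) 1, 1 / (p : ℝ) *
          ∫ ω, Real.log (1 + (K : ℝ) * (∏ k ∈ Finset.range p, (1 + X k ω) - 1)) ∂ℙ)
        + 1 / ((p : ℝ) + 1) * S1 := by
        rw [hS2, Real.mul_iSup_of_nonneg (by positivity : (0:ℝ) ≤ 1 / (p : ℝ))]
end

section
/- Sufficient attractiveness result: if in addition E[1/(1 + X(0))] ≤ 1, then the buy-and-holder matches the high-frequency trader, i.e., g_n* = g_1*. -/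
open MeasureTheory ProbabilityTheory Real

/-- A measurable function bounded a.e. in `[c, d]` with `0 < c` has integrable log. -/
lemma integrable_log_of_bdd' {Ω : Type*} [MeasureSpace Ω]
    [IsProbabilityMeasure (ℙ : Measure Ω)] {f : Ω → ℝ} (hf : Measurable f)
    {c d : ℝ} (hc : 0 < c) (h : ∀ᵐ ω ∂ℙ, c ≤ f ω ∧ f ω ≤ d) :
    Integrable (fun ω => Real.log (f ω)) ℙ := by
  refine (integrable_const (max (Real.log d) (-(Real.log c)))).mono'
    ((Real.measurable_log.comp hf).aestronglyMeasurable) ?_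
  filter_upwards [h] with ω ⟨h1, h2⟩
  rw [Real.norm_eq_abs, abs_le]
  have l1 : Real.log c ≤ Real.log (f ω) := Real.log_le_log hc h1
  have l2 : Real.log (f ω) ≤ Real.log d := Real.log_le_log (lt_of_lt_of_le hc h1) h2
  constructor
  · have := neg_le_neg (le_max_right (Real.log d) (-(Real.log c)))
    linarith
  · exact le_trans l2 (le_max_left _ _)

/-- Core inequality: for bounded positive `Y` with `E[Y⁻¹] ≤ 1` and `K ∈ [0,1]`,
`E[log (1 + K (Y - 1))] ≤ E[log Y]`. -/
lemma core_le' {Ω : Type*} [MeasureSpace Ω] [IsProbabilityMeasure (ℙ : Measure Ω)]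
    {Y : Ω → ℝ} (hY : Measurable Y) {a b : ℝ} (ha : 0 < a)
    (hab : ∀ᵐ ω ∂ℙ, Y ω ∈ Set.Icc a b)
    (hinv : (∫ ω, (Y ω)⁻¹ ∂ℙ) ≤ 1) {K : ℝ} (hK0 : 0 ≤ K) (hK1 : K ≤ 1) :
    (∫ ω, Real.log (1 + K * (Y ω - 1)) ∂ℙ) ≤ ∫ ω, Real.log (Y ω) ∂ℙ := by
  set c := min 1 a with hc
  set d := max 1 b with hd
  have hc0 : 0 < c := lt_min one_pos ha
  have hca : c ≤ a := min_le_right _ _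
  have hc1 : c ≤ 1 := min_le_left _ _
  have hbd : b ≤ d := le_max_right _ _
  have h1d : (1:ℝ) ≤ d := le_max_left _ _
  have hcd : ∀ᵐ ω ∂ℙ, c ≤ 1 + K * (Y ω - 1) ∧ 1 + K * (Y ω - 1) ≤ d
      ∧ c ≤ Y ω ∧ Y ω ≤ d := by
    filter_upwards [hab] with ω hω
    obtain ⟨h1, h2⟩ := hω
    refine ⟨?_, ?_, le_trans hca h1, le_trans h2 hbd⟩ <;> nlinarith
  have hZm : Measurable (fun ω => 1 + K * (Y ω - 1)) :=
    measurable_const.add ((hY.sub measurable_const).const_mul K)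
  have hint1 : Integrable (fun ω => Real.log (1 + K * (Y ω - 1))) ℙ :=
    integrable_log_of_bdd' hZm hc0 (hcd.mono fun ω h => ⟨h.1, h.2.1⟩)
  have hintY : Integrable (fun ω => Real.log (Y ω)) ℙ :=
    integrable_log_of_bdd' hY hc0 (hcd.mono fun ω h => ⟨h.2.2.1, h.2.2.2⟩)
  have hintinv : Integrable (fun ω => (Y ω)⁻¹) ℙ := by
    refine (integrable_const c⁻¹).mono' (hY.inv.aestronglyMeasurable) ?_
    filter_upwards [hcd] with ω h
    have hYpos : 0 < Y ω := lt_of_lt_of_le hc0 h.2.2.1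
    rw [Real.norm_eq_abs, abs_of_nonneg (by positivity)]
    exact inv_anti₀ hc0 h.2.2.1
  have h2' : Integrable (fun ω => (1 - K) * ((Y ω)⁻¹ - 1)) ℙ :=
    ((hintinv.sub (integrable_const 1)).const_mul (1 - K))
  have hintR : Integrable
      (fun ω => Real.log (Y ω) + (1 - K) * ((Y ω)⁻¹ - 1)) ℙ :=
    hintY.add h2' 
  have hpt : ∀ᵐ ω ∂ℙ, Real.log (1 + K * (Y ω - 1))
      ≤ Real.log (Y ω) + (1 - K) * ((Y ω)⁻¹ - 1) := by
    filter_upwards [hcd] with ω h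
    obtain ⟨hZc, hZd, hYc, hYd⟩ := h
    have hZ : 0 < 1 + K * (Y ω - 1) := lt_of_lt_of_le hc0 hZc
    have hYpos : 0 < Y ω := lt_of_lt_of_le hc0 hYc
    have hle := Real.log_le_sub_one_of_pos (div_pos hZ hYpos)
    rw [Real.log_div (ne_of_gt hZ) (ne_of_gt hYpos)] at hle
    have heq : (1 + K * (Y ω - 1)) / Y ω - 1 = (1 - K) * ((Y ω)⁻¹ - 1) := by
      field_simp
      ring
    rw [heq] at hle
    linarith
  have hmono := integral_mono_ae hint1 hintR hpt
  have hR : (∫ ω, (Real.log (Y ω) + (1 - K) * ((Y ω)⁻¹ - 1)) ∂ℙ)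
      = (∫ ω, Real.log (Y ω) ∂ℙ) + (1 - K) * ((∫ ω, (Y ω)⁻¹ ∂ℙ) - 1) := by
    have e1 : (∫ ω, (Real.log (Y ω) + (1 - K) * ((Y ω)⁻¹ - 1)) ∂ℙ)
        = (∫ ω, Real.log (Y ω) ∂ℙ) + ∫ ω, (1 - K) * ((Y ω)⁻¹ - 1) ∂ℙ :=
      integral_add hintY h2'
    have e2 : (∫ ω, (1 - K) * ((Y ω)⁻¹ - 1) ∂ℙ) = (1 - K) * ∫ ω, ((Y ω)⁻¹ - 1) ∂ℙ :=
      integral_const_mul _ _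
    have e3 : (∫ ω, ((Y ω)⁻¹ - 1) ∂ℙ) = (∫ ω, (Y ω)⁻¹ ∂ℙ) - 1 := by
      rw [integral_sub hintinv (integrable_const 1)]
      simp
    rw [e1, e2, e3]
  rw [hR] at hmono
  nlinarith

/-- Expectation of a finite product of independent integrable real random variables. -/
lemma integral_finset_prod_eq' {Ω ι : Type*} [MeasureSpace Ω]
    [IsProbabilityMeasure (ℙ : Measure Ω)]
    {g : ι → Ω → ℝ} (hindep : iIndepFun (m := fun _ : ι => Real.measurableSpace) g ℙ)
    (hgmeas : ∀ i, Measurable (g i)) (s : Finset ι) :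
    (∫ ω, ∏ i ∈ s, g i ω ∂ℙ) = ∏ i ∈ s, ∫ ω, g i ω ∂ℙ := by
  classical
  induction s using Finset.induction_on with
  | empty => simp
  | insert a s hi ih =>
    have hprodfn : (fun ω => ∏ i ∈ s, g i ω) = ∏ i ∈ s, g i := by
      funext ω; rw [Finset.prod_apply]
    have hind : IndepFun (g a) (fun ω => ∏ i ∈ s, g i ω) ℙ := by
      rw [hprodfn]
      exact (hindep.indepFun_finset_prod_of_notMem hgmeas hi).symm
    have hmul := hind.integral_mul_eq_mul_integral (hgmeas a).aestronglyMeasurable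
      ((Finset.measurable_prod s fun i _ => hgmeas i).aestronglyMeasurable)
    simp only [Finset.prod_insert hi]
    rw [show (∫ ω, g a ω * ∏ i ∈ s, g i ω ∂ℙ)
        = (∫ ω, g a ω ∂ℙ) * ∫ ω, ∏ i ∈ s, g i ω ∂ℙ from hmul, ih]

/-- sup over a nonempty type equals the value at a point dominating all values. -/
lemma ciSup_eq_of_le' {ι : Sort*} [Nonempty ι] {f : ι → ℝ} (i : ι)
    (h : ∀ j, f j ≤ f i) : (⨆ j, f j) = f i :=
  le_antisymm (ciSup_le h)
    (le_ciSup ⟨f i, by rintro _ ⟨j, rfl⟩; exact h j⟩ i)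

/-- **Sufficient attractiveness.** For i.i.d. returns `X 0, …, X (n-1)` bounded
a.s. in `[Xmin, Xmax]` where `-1 < Xmin < 0 < Xmax`, if in addition the stock
is sufficiently attractive, i.e. `E[1/(1 + X 0)] ≤ 1`, then the buy-and-holder
matches the high-frequency trader:
`g_n* = sup_{K ∈ [0,1]} (1/n) E[log (1 + K 𝒳_n)]` equals
`g_1* = sup_{K ∈ [0,1]} E[log (1 + K X 0)]`, where
`𝒳_n = ∏_{k<n} (1 + X k) - 1` is the compound return. -/
theorem sufficiently_attractive_buy_and_hold_matches
    {Ω : Type*} [MeasureSpace Ω] [IsProbabilityMeasure (ℙ : Measure Ω)]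
    (n : ℕ) (hn : 1 ≤ n) (X : ℕ → Ω → ℝ)
    (hmeas : ∀ i, Measurable (X i))
    (hindep : iIndepFun (m := fun _ : Fin n => Real.measurableSpace)
      (fun i : Fin n => X i) ℙ)
    (hident : ∀ i < n, IdentDistrib (X i) (X 0) ℙ ℙ)
    (Xmin Xmax : ℝ) (hXmin : -1 < Xmin) (hXminNeg : Xmin < 0) (hXmaxPos : 0 < Xmax)
    (hbdd : ∀ i < n, ∀ᵐ ω ∂ℙ, X i ω ∈ Set.Icc Xmin Xmax)
    (hattr : (∫ ω, 1 / (1 + X 0 ω) ∂ℙ) ≤ 1) :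
    (⨆ K : Set.Icc (0:ℝ) 1,
        (1 / (n : ℝ)) *
          ∫ ω, Real.log (1 + (K : ℝ) * (∏ k ∈ Finset.range n, (1 + X k ω) - 1)) ∂ℙ)
      = ⨆ K : Set.Icc (0:ℝ) 1, ∫ ω, Real.log (1 + (K : ℝ) * X 0 ω) ∂ℙ := by
  classical
  haveI : Nonempty (Set.Icc (0:ℝ) 1) := ⟨⟨1, by norm_num⟩⟩
  have hnpos : 0 < n := hn
  have ha : (0:ℝ) < 1 + Xmin := by linarith
  have hX0 := hbdd 0 hnpos
  -- one-period wealth factor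
  set Y1 : Ω → ℝ := fun ω => 1 + X 0 ω with hY1def
  have hY1m : Measurable Y1 := measurable_const.add (hmeas 0)
  have hY1b : ∀ᵐ ω ∂ℙ, Y1 ω ∈ Set.Icc (1 + Xmin) (1 + Xmax) := by
    filter_upwards [hX0] with ω hω
    exact ⟨by simpa [Y1] using add_le_add_left hω.1 1,
      by simpa [Y1] using add_le_add_left hω.2 1⟩
  have hattr' : (∫ ω, (Y1 ω)⁻¹ ∂ℙ) ≤ 1 := by
    simpa [Y1, one_div] using hattr
  -- n-period wealth factor
  set Yn : Ω → ℝ := fun ω => ∏ k ∈ Finset.range n, (1 + X k ω) with hYndef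
  have hYnm : Measurable Yn :=
    Finset.measurable_prod _ fun i _ => measurable_const.add (hmeas i)
  have hballs : ∀ᵐ ω ∂ℙ, ∀ k ∈ Finset.range n, X k ω ∈ Set.Icc Xmin Xmax := by
    have : ∀ᵐ ω ∂ℙ, ∀ k, k < n → X k ω ∈ Set.Icc Xmin Xmax := by
      rw [ae_all_iff]
      intro k
      by_cases hk : k < n
      · filter_upwards [hbdd k hk] with ω hω _
        exact hω
      · exact ae_of_all _ fun ω h => absurd h hk
    filter_upwards [this] with ω h k hk
    exact h k (Finset.mem_range.1 hk)
  have hYnb : ∀ᵐ ω ∂ℙ, Yn ω ∈ Set.Icc ((1 + Xmin) ^ n) ((1 + Xmax) ^ n) := by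
    filter_upwards [hballs] with ω h
    constructor
    · calc (1 + Xmin) ^ n = ∏ _k ∈ Finset.range n, (1 + Xmin) := by simp
        _ ≤ Yn ω := Finset.prod_le_prod (fun k _ => ha.le)
            (fun k hk => by linarith [(h k hk).1])
    · calc Yn ω ≤ ∏ _k ∈ Finset.range n, (1 + Xmax) :=
            Finset.prod_le_prod (fun k hk => by linarith [(h k hk).1])
            (fun k hk => by linarith [(h k hk).2])
        _ = (1 + Xmax) ^ n := by simp
  have han : (0:ℝ) < (1 + Xmin) ^ n := pow_pos ha n
  -- inverse moment of the product
  have hinvYn : (∫ ω, (Yn ω)⁻¹ ∂ℙ) ≤ 1 := by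
    have hu : Measurable (fun x : ℝ => (1 + x)⁻¹) :=
      (measurable_const.add measurable_id).inv
    set g : Fin n → Ω → ℝ := fun i => (fun x : ℝ => (1 + x)⁻¹) ∘ X i with hgdef
    have hgind : iIndepFun (m := fun _ : Fin n => Real.measurableSpace) g ℙ :=
      hindep.comp _ fun _ => hu
    have hgmeas : ∀ i, Measurable (g i) := fun i => hu.comp (hmeas i)
    have hrw : ∀ ω, (Yn ω)⁻¹ = ∏ i : Fin n, g i ω := by
      intro ω
      simp only [Yn, g, Function.comp]
      rw [← Fin.prod_univ_eq_prod_range (fun k => 1 + X k ω) n, Finset.prod_inv_distrib]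
    have hnn : (0:ℝ) ≤ ∫ ω, (1 + X 0 ω)⁻¹ ∂ℙ := by
      refine integral_nonneg_of_ae ?_
      filter_upwards [hX0] with ω hω
      have : 0 < 1 + X 0 ω := by linarith [hω.1]
      positivity
    have hone : ∀ i : Fin n, (∫ ω, g i ω ∂ℙ) = ∫ ω, (1 + X 0 ω)⁻¹ ∂ℙ := by
      intro i
      have := ((hident i i.isLt).comp hu).integral_eq
      simpa [g, Function.comp] using this
    calc (∫ ω, (Yn ω)⁻¹ ∂ℙ) = ∫ ω, ∏ i : Fin n, g i ω ∂ℙ := by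
          simp_rw [hrw]
      _ = ∏ i : Fin n, ∫ ω, g i ω ∂ℙ := integral_finset_prod_eq' hgind hgmeas _
      _ = (∫ ω, (1 + X 0 ω)⁻¹ ∂ℙ) ^ n := by
          rw [Finset.prod_congr rfl fun i _ => hone i]
          simp
      _ ≤ 1 := pow_le_one₀ hnn (by simpa [one_div] using hattr)
  -- value at K = 1 of the n-period objective equals the one-period one
  have hlogint : ∀ k < n, Integrable (fun ω => Real.log (1 + X k ω)) ℙ := by
    intro k hk
    refine integrable_log_of_bdd' (d := 1 + Xmax) (measurable_const.add (hmeas k)) ha ?_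
    filter_upwards [hbdd k hk] with ω hω
    exact ⟨by linarith [hω.1], by linarith [hω.2]⟩
  have hlogeq : ∀ k < n, (∫ ω, Real.log (1 + X k ω) ∂ℙ)
      = ∫ ω, Real.log (1 + X 0 ω) ∂ℙ := by
    intro k hk
    have hu : Measurable fun x : ℝ => Real.log (1 + x) :=
      Real.measurable_log.comp (measurable_const.add measurable_id)
    have := ((hident k hk).comp hu).integral_eq
    simpa [Function.comp] using this
  have hYnval : (1 / (n : ℝ)) * (∫ ω, Real.log (Yn ω) ∂ℙ)
      = ∫ ω, Real.log (Y1 ω) ∂ℙ := by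
    have hae : ∀ᵐ ω ∂ℙ, Real.log (Yn ω)
        = ∑ k ∈ Finset.range n, Real.log (1 + X k ω) := by
      filter_upwards [hballs] with ω h
      exact Real.log_prod fun k hk => by
        have := (h k hk).1; intro hzero; nlinarith [ha]
    rw [integral_congr_ae hae,
      integral_finset_sum _ (fun k hk => hlogint k (Finset.mem_range.1 hk)),
      Finset.sum_congr rfl fun k hk => hlogeq k (Finset.mem_range.1 hk)]
    simp only [Finset.sum_const, Finset.card_range, nsmul_eq_mul, Y1]
    field_simp
  -- both suprema are attained at K = 1
  have hsupL : (⨆ K : Set.Icc (0:ℝ) 1,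
      (1 / (n : ℝ)) *
        ∫ ω, Real.log (1 + (K : ℝ) * (∏ k ∈ Finset.range n, (1 + X k ω) - 1)) ∂ℙ)
      = (1 / (n : ℝ)) * ∫ ω, Real.log (Yn ω) ∂ℙ := by
    have h1 : ∀ K : Set.Icc (0:ℝ) 1,
        (1 / (n : ℝ)) *
          (∫ ω, Real.log (1 + (K : ℝ) * (∏ k ∈ Finset.range n, (1 + X k ω) - 1)) ∂ℙ)
        ≤ (1 / (n : ℝ)) * ∫ ω, Real.log (Yn ω) ∂ℙ := by
      intro K
      refine mul_le_mul_of_nonneg_left ?_ (by positivity)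
      exact core_le' hYnm han hYnb hinvYn K.2.1 K.2.2
    have h2 : ((1 : ℝ)) ∈ Set.Icc (0:ℝ) 1 := by norm_num
    have h3 : (1 / (n : ℝ)) *
        (∫ ω, Real.log (1 + ((1:ℝ)) * (∏ k ∈ Finset.range n, (1 + X k ω) - 1)) ∂ℙ)
        = (1 / (n : ℝ)) * ∫ ω, Real.log (Yn ω) ∂ℙ := by
      congr 1
      refine integral_congr_ae (ae_of_all _ fun ω => ?_)
      congr 1
      simp [Yn]
    rw [ciSup_eq_of_le' (⟨1, h2⟩ : Set.Icc (0:ℝ) 1) (fun j => (h1 j).trans (le_of_eq h3.symm))]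
    exact h3
  have hsupR : (⨆ K : Set.Icc (0:ℝ) 1, ∫ ω, Real.log (1 + (K : ℝ) * X 0 ω) ∂ℙ)
      = ∫ ω, Real.log (Y1 ω) ∂ℙ := by
    have h1 : ∀ K : Set.Icc (0:ℝ) 1,
        (∫ ω, Real.log (1 + (K : ℝ) * X 0 ω) ∂ℙ) ≤ ∫ ω, Real.log (Y1 ω) ∂ℙ := by
      intro K
      have := core_le' hY1m ha hY1b hattr' K.2.1 K.2.2
      refine le_trans (le_of_eq ?_) this
      refine integral_congr_ae (ae_of_all _ fun ω => ?_)
      congr 1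
      simp only [Y1]
      ring
    have h2 : ((1 : ℝ)) ∈ Set.Icc (0:ℝ) 1 := by norm_num
    have h3 : (∫ ω, Real.log (1 + ((1:ℝ)) * X 0 ω) ∂ℙ) = ∫ ω, Real.log (Y1 ω) ∂ℙ := by
      refine integral_congr_ae (ae_of_all _ fun ω => ?_)
      congr 1
      simp [Y1]
    rw [ciSup_eq_of_le' (⟨1, h2⟩ : Set.Icc (0:ℝ) 1) (fun j => (h1 j).trans (le_of_eq h3.symm))]
    exact h3
  rw [hsupL, hsupR, hYnval]
end

section
/- Self-Financing Lemma: let K ≥ 0. The one-step-delayed high-frequency trader is long-only and self-financed for every admissible return sequence — i.e., for every sequence X(k) ∈ [X_min, X_max] (k ≥ 0) one has 0 ≤ I(k) ≤ V(k) for all k ≥ 1 — if and only if 0 ≤ K ≤ 1/(1 + X_max). Furthermore, when 0 ≤ K ≤ 1/(1 + X_max), the account value satisfies V(k) ≥ 0 for all k ≥ 0 and every admissible return sequence. -/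
/-- Account value of the one-step-delayed high-frequency trader with Kelly
fraction `K`, initial value `v` and return sequence `X`:
`V 0 = V 1 = v` and `V (k+1) = V k + I k * X k` for `k ≥ 1`, where
`I k = K * (1 + X (k-1)) * V (k-1)` is the investment executed at stage `k`. -/
def delayedAcct (K v : ℝ) (X : ℕ → ℝ) : ℕ → ℝ
  | 0 => v
  | 1 => v
  | (k + 2) => delayedAcct K v X (k + 1)
      + (K * (1 + X k) * delayedAcct K v X k) * X (k + 1)

/-- Investment executed at stage `k ≥ 1` by the one-step-delayed
high-frequency trader: `I k = K * (1 + X (k-1)) * V (k-1)`. -/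
def delayedInv (K v : ℝ) (X : ℕ → ℝ) (k : ℕ) : ℝ :=
  K * (1 + X (k - 1)) * delayedAcct K v X (k - 1)

/-- **Self-Financing Lemma.** Let `-1 < Xmin < 0 < Xmax`, `v > 0` and `K ≥ 0`.
The one-step-delayed high-frequency trader is long-only and self-financed for
every admissible return sequence — i.e. for every sequence with
`X k ∈ [Xmin, Xmax]` one has `0 ≤ I k ≤ V k` for all `k ≥ 1` — if and only if
`K ≤ 1/(1 + Xmax)`.  Furthermore, when `0 ≤ K ≤ 1/(1 + Xmax)`, the account
value satisfies `V k ≥ 0` for all `k ≥ 0` and every admissible return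
sequence. -/
theorem self_financing_lemma
    (Xmin Xmax : ℝ) (hXmin : -1 < Xmin) (hXminNeg : Xmin < 0) (hXmaxPos : 0 < Xmax)
    (v : ℝ) (hv : 0 < v) (K : ℝ) (hK : 0 ≤ K) :
    ((∀ X : ℕ → ℝ, (∀ k, X k ∈ Set.Icc Xmin Xmax) → ∀ k, 1 ≤ k →
        0 ≤ delayedInv K v X k ∧ delayedInv K v X k ≤ delayedAcct K v X k)
      ↔ K ≤ 1 / (1 + Xmax))
    ∧ (K ≤ 1 / (1 + Xmax) →
        ∀ X : ℕ → ℝ, (∀ k, X k ∈ Set.Icc Xmin Xmax) →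
          ∀ k, 0 ≤ delayedAcct K v X k) := by
  have h1max : (0:ℝ) < 1 + Xmax := by linarith
  -- key invariant lemma
  have key : K * (1 + Xmax) ≤ 1 →
      ∀ X : ℕ → ℝ, (∀ k, X k ∈ Set.Icc Xmin Xmax) →
      ∀ k, 0 ≤ delayedAcct K v X k ∧
        K * (1 + X k) * delayedAcct K v X k ≤ delayedAcct K v X (k + 1) := by
    intro hK1 X hX
    have h1x : ∀ k, (0:ℝ) ≤ 1 + X k := fun k => by
      have := (hX k).1; linarith
    have hK1' : ∀ k, K * (1 + X k) ≤ 1 := fun k => by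
      have h := (hX k).2
      nlinarith
    have hKle1 : K ≤ 1 := by nlinarith
    intro k
    induction k with
    | zero =>
      refine ⟨by simpa [delayedAcct] using hv.le, ?_⟩
      show K * (1 + X 0) * delayedAcct K v X 0 ≤ delayedAcct K v X 1
      simp only [delayedAcct]
      nlinarith [hK1' 0, h1x 0]
    | succ n ih =>
      obtain ⟨hVn, hIn⟩ := ih
      have hVn1 : 0 ≤ delayedAcct K v X (n + 1) := by
        have := mul_nonneg (mul_nonneg hK (h1x n)) hVn
        linarith
      refine ⟨hVn1, ?_⟩
      show K * (1 + X (n + 1)) * delayedAcct K v X (n + 1) ≤ delayedAcct K v X (n + 2)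
      have hrec : delayedAcct K v X (n + 2) = delayedAcct K v X (n + 1)
          + (K * (1 + X n) * delayedAcct K v X n) * X (n + 1) := rfl
      rcases le_or_gt 0 (X (n + 1)) with h | h
      · nlinarith [hK1' (n + 1),
          mul_nonneg (mul_nonneg (mul_nonneg hK (h1x n)) hVn) h]
      · nlinarith [h1x (n + 1), mul_le_mul_of_nonpos_right hIn h.le,
          mul_nonneg (sub_nonneg.mpr hKle1) (mul_nonneg (h1x (n + 1)) hVn1)]
  constructor
  · constructor
    · intro hall
      have hXc : ∀ k, (fun _ : ℕ => Xmax) k ∈ Set.Icc Xmin Xmax := by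
        intro k; exact ⟨by linarith, le_refl _⟩
      have h1 := (hall (fun _ => Xmax) hXc 1 le_rfl).2
      have hInv : delayedInv K v (fun _ => Xmax) 1 = K * (1 + Xmax) * v := by
        simp [delayedInv, delayedAcct]
      have hAcct : delayedAcct K v (fun _ => Xmax) 1 = v := rfl
      rw [hInv, hAcct] at h1
      rw [le_div_iff₀ h1max]
      nlinarith
    · intro hKle X hX k hk
      have hK1 : K * (1 + Xmax) ≤ 1 := by
        rw [le_div_iff₀ h1max] at hKle; linarith
      obtain ⟨n, rfl⟩ : ∃ n, k = n + 1 := ⟨k - 1, by omega⟩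
      have hkey := key hK1 X hX n
      have h1x : (0:ℝ) ≤ 1 + X n := by
        have := (hX n).1; linarith
      have hInv : delayedInv K v X (n + 1) = K * (1 + X n) * delayedAcct K v X n := by
        simp [delayedInv]
      rw [hInv]
      exact ⟨mul_nonneg (mul_nonneg hK h1x) hkey.1, hkey.2⟩
  · intro hKle X hX k
    have hK1 : K * (1 + Xmax) ≤ 1 := by
      rw [le_div_iff₀ h1max] at hKle; linarith
    exact (key hK1 X hX k).1
end

section
/- Induction step for delayed self-financing: suppose 0 ≤ K ≤ 1/(1 + X_max), and at stage k ≥ 1 one has V(k−1) ≥ 0, I(k) = K·(1 + X(k−1))·V(k−1) ≥ 0, I(k) ≤ V(k), and X(k) ∈ [X_min, X_max]. Then the next investment I(k+1) = K·(1 + X(k))·V(k) satisfies I(k+1) ≤ V(k+1), where V(k+1) = V(k) + I(k)·X(k). -/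
/-- **Induction step for delayed self-financing.** Suppose
`-1 < Xmin < 0 < Xmax` and `0 ≤ K ≤ 1/(1 + Xmax)`, and at stage `k ≥ 1` one
has `V (k-1) ≥ 0` (denoted `Vprev`), a nonnegative executed investment
`I k = K * (1 + X (k-1)) * V (k-1)` (with `X (k-1)` denoted `xprev`),
`I k ≤ V k` (with `V k` denoted `Vcur`), and `X k ∈ [Xmin, Xmax]` (denoted
`xcur`).  Then the next investment `I (k+1) = K * (1 + X k) * V k` satisfies
`I (k+1) ≤ V (k+1)`, where `V (k+1) = V k + I k * X k`. -/
theorem delayed_self_financing_induction_step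
    (Xmin Xmax K Vprev Vcur xprev xcur : ℝ)
    (hXmin : -1 < Xmin) (hXminNeg : Xmin < 0) (hXmaxPos : 0 < Xmax)
    (hK0 : 0 ≤ K) (hK1 : K ≤ 1 / (1 + Xmax))
    (hVprev : 0 ≤ Vprev)
    (hI0 : 0 ≤ K * (1 + xprev) * Vprev)
    (hIle : K * (1 + xprev) * Vprev ≤ Vcur)
    (hx : xcur ∈ Set.Icc Xmin Xmax) :
    K * (1 + xcur) * Vcur ≤ Vcur + (K * (1 + xprev) * Vprev) * xcur := by
  obtain ⟨hxl, hxr⟩ := hx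
  have h1 : 0 < 1 + Xmax := by linarith
  have hK1' : K * (1 + Xmax) ≤ 1 := by
    rw [div_eq_inv_mul, mul_one] at hK1
    calc K * (1 + Xmax) ≤ (1 + Xmax)⁻¹ * (1 + Xmax) := by
          apply mul_le_mul_of_nonneg_right hK1 h1.le
      _ = 1 := inv_mul_cancel₀ h1.ne'
  have hVcur : 0 ≤ Vcur := le_trans hI0 hIle
  set I := K * (1 + xprev) * Vprev with hI
  rcases le_or_gt 0 xcur with h | h
  · have : K * (1 + xcur) ≤ 1 := le_trans (by nlinarith) hK1'
    nlinarith [mul_nonneg hI0 h]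
  · have h2 : 0 < 1 + xcur := by linarith
    have : Vcur * xcur ≤ I * xcur := by
      exact mul_le_mul_of_nonpos_right hIle h.le
    have hKle1 : K ≤ 1 := by nlinarith
    nlinarith [mul_nonneg (mul_nonneg hVcur h2.le) (by linarith : (0:ℝ) ≤ 1 - K)]
end

section
/- Nonnegativity of the delayed account: if 0 ≤ K ≤ 1/(1 + X_max), then for every return sequence X(k) ∈ [X_min, X_max] the one-step-delayed high-frequency trader's account value satisfies V(k) ≥ 0 for all k ≥ 0. -/
/-- **Nonnegativity of the delayed account.** If `0 ≤ K ≤ 1/(1 + Xmax)`,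
where `-1 < Xmin < 0 < Xmax`, then for every return sequence with values in
`[Xmin, Xmax]` the one-step-delayed high-frequency trader's account value
(started at `v > 0`) satisfies `V k ≥ 0` for all `k ≥ 0`. -/
theorem delayed_account_nonneg
    (Xmin Xmax : ℝ) (hXmin : -1 < Xmin) (hXminNeg : Xmin < 0) (hXmaxPos : 0 < Xmax)
    (v : ℝ) (hv : 0 < v) (K : ℝ) (hK0 : 0 ≤ K) (hK1 : K ≤ 1 / (1 + Xmax))
    (X : ℕ → ℝ) (hX : ∀ k, X k ∈ Set.Icc Xmin Xmax) :
    ∀ k, 0 ≤ delayedAcct K v X k := by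
  have hXm1 : (0:ℝ) < 1 + Xmax := by linarith
  have hK1' : K * (1 + Xmax) ≤ 1 := (le_div_iff₀ hXm1).mp hK1
  have hKle1 : K ≤ 1 := by nlinarith
  have key : ∀ k, 0 ≤ delayedAcct K v X k ∧
      K * (1 + X k) * delayedAcct K v X k ≤ delayedAcct K v X (k+1) := by
    intro k
    induction k with
    | zero =>
      have hX0 := hX 0
      refine ⟨le_of_lt hv, ?_⟩
      show K * (1 + X 0) * v ≤ v
      have h : K * (1 + X 0) ≤ 1 := by nlinarith [hX0.2]
      nlinarith [mul_le_mul_of_nonneg_right h (le_of_lt hv)]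
    | succ n ih =>
      obtain ⟨h0, h1⟩ := ih
      have hXn := hX n
      have hXn1 := hX (n+1)
      have hInn : 0 ≤ K * (1 + X n) * delayedAcct K v X n := by
        have : (0:ℝ) < 1 + X n := by linarith [hXn.1]
        positivity
      have hV1 : 0 ≤ delayedAcct K v X (n+1) := le_trans hInn h1
      refine ⟨hV1, ?_⟩
      show K * (1 + X (n+1)) * delayedAcct K v X (n+1) ≤
        delayedAcct K v X (n+1)
          + (K * (1 + X n) * delayedAcct K v X n) * X (n+1)
      set I := K * (1 + X n) * delayedAcct K v X n with hI
      set V1 := delayedAcct K v X (n+1) with hV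
      rcases le_or_gt 0 (X (n+1)) with hpos | hneg
      · have h : K * (1 + X (n+1)) ≤ 1 := by nlinarith [hXn1.2]
        nlinarith [mul_le_mul_of_nonneg_right h hV1, mul_nonneg hInn hpos]
      · have h1X : (0:ℝ) ≤ 1 + X (n+1) := by linarith [hXn1.1]
        nlinarith [mul_le_mul_of_nonpos_right h1 (le_of_lt hneg),
          mul_nonneg (mul_nonneg (sub_nonneg.mpr hKle1) h1X) hV1]
  intro k
  exact (key k).1
end

section
/- Closed-form delayed buy-and-hold log-growth on the binary lattice: let X(0),…,X(n−1) be i.i.d. with P(X(k) = X_max) = p and P(X(k) = X_min) = 1 − p, where −1 < X_min < 0 < X_max < ∞ and p ∈ [0,1], and let 0 ≤ K ≤ 1/(1 + X_max). Then (1/n)·E[log(V(n)/v)] = (1/n)·p·∑_{i=0}^{n−1} p_i·log(1 + K·(1 + X_max)·z_i) + (1/n)·(1 − p)·∑_{i=0}^{n−1} p_i·log(1 + K·(1 + X_min)·z_i), where z_i = (1 + X_max)^i·(1 + X_min)^{n−1−i} − 1 and p_i = C(n−1, i)·p^i·(1 − p)^{n−1−i}. -/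
open MeasureTheory ProbabilityTheory Real

private lemma prod_ite_card {a b : ℝ} {s t : Finset ℕ} (hs : s ⊆ t) :
    ∏ k ∈ t, (if k ∈ s then a else b) = a ^ s.card * b ^ (t.card - s.card) := by
  classical
  rw [← Finset.prod_sdiff hs,
    Finset.prod_congr rfl (fun k hk => if_neg (Finset.mem_sdiff.1 hk).2),
    Finset.prod_congr rfl (fun (k : ℕ) (hk : k ∈ s) => if_pos hk),
    Finset.prod_const, Finset.prod_const, Finset.card_sdiff_of_subset hs, mul_comm]

/-- **Closed-form delayed buy-and-hold log-growth on the binary lattice.**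
Let `X 0, …, X (n-1)` be i.i.d. with `P(X k = Xmax) = p` and
`P(X k = Xmin) = 1 - p`, where `-1 < Xmin < 0 < Xmax` and `p ∈ [0,1]`, and let
`0 ≤ K ≤ 1/(1 + Xmax)`.  With the one-step-delayed buy-and-holder's account
value `V n = (1 + K·(1 + X 0)·(∏_{k=1}^{n-1} (1 + X k) - 1))·v` (initial value
`v > 0`), the per-period expected log-growth `(1/n)·E[log (V n / v)]` equals
`(1/n)·p·∑_{i<n} pᵢ·log (1 + K·(1 + Xmax)·zᵢ)
  + (1/n)·(1-p)·∑_{i<n} pᵢ·log (1 + K·(1 + Xmin)·zᵢ)`,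
where `zᵢ = (1 + Xmax)^i·(1 + Xmin)^(n-1-i) - 1` and
`pᵢ = C(n-1, i)·p^i·(1-p)^(n-1-i)`. -/
theorem binary_lattice_delayed_buy_hold_growth
    {Ω : Type*} [MeasureSpace Ω] [IsProbabilityMeasure (ℙ : Measure Ω)]
    (n : ℕ) (hn : 1 ≤ n)
    (Xmin Xmax : ℝ) (hXmin : -1 < Xmin) (hXminNeg : Xmin < 0) (hXmaxPos : 0 < Xmax)
    (p : ℝ) (hp : p ∈ Set.Icc (0:ℝ) 1)
    (X : ℕ → Ω → ℝ) (hmeas : ∀ i, Measurable (X i))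
    (hindep : iIndepFun (m := fun _ : Fin n => Real.measurableSpace)
      (fun i : Fin n => X i) ℙ)
    (hmax : ∀ i < n, ℙ {ω | X i ω = Xmax} = ENNReal.ofReal p)
    (hmin : ∀ i < n, ℙ {ω | X i ω = Xmin} = ENNReal.ofReal (1 - p))
    (K v : ℝ) (hv : 0 < v) (hK0 : 0 ≤ K) (hK1 : K ≤ 1 / (1 + Xmax)) :
    (1 / (n : ℝ)) *
        ∫ ω, Real.log
          (((1 + K * (1 + X 0 ω) * (∏ k ∈ Finset.Ico 1 n, (1 + X k ω) - 1)) * v) / v) ∂ℙ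
      = (1 / (n : ℝ)) * p *
          ∑ i ∈ Finset.range n,
            ((n - 1).choose i : ℝ) * p ^ i * (1 - p) ^ (n - 1 - i) *
              Real.log (1 + K * (1 + Xmax) *
                ((1 + Xmax) ^ i * (1 + Xmin) ^ (n - 1 - i) - 1))
        + (1 / (n : ℝ)) * (1 - p) *
            ∑ i ∈ Finset.range n,
              ((n - 1).choose i : ℝ) * p ^ i * (1 - p) ^ (n - 1 - i) *
                Real.log (1 + K * (1 + Xmin) *
                  ((1 + Xmax) ^ i * (1 + Xmin) ^ (n - 1 - i) - 1)) := by
  classical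
  obtain ⟨hp0, hp1⟩ := hp
  have hn0 : 0 < n := hn
  have hq0 : (0:ℝ) ≤ 1 - p := by linarith
  set c : Finset ℕ → ℕ → ℝ := fun s k => if k ∈ s then Xmax else Xmin with hc
  set w : Finset ℕ → ℕ → ℝ := fun s k => if k ∈ s then p else 1 - p with hw
  set G : Finset ℕ → ℝ := fun s =>
    Real.log (1 + K * (1 + c s 0) * (∏ k ∈ Finset.Ico 1 n, (1 + c s k) - 1)) with hG
  set E : Finset ℕ → Set Ω := fun s => ⋂ i : Fin n, X i ⁻¹' {c s i} with hE
  have hwnn : ∀ s k, 0 ≤ w s k := by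
    intro s k; by_cases h : k ∈ s <;> simp [hw, h, hp0, hq0]
  have hnelt : Xmin ≠ Xmax := ne_of_lt (hXminNeg.trans hXmaxPos)
  have hEmeas : ∀ s, MeasurableSet (E s) := fun s =>
    MeasurableSet.iInter fun i => (hmeas i) (measurableSet_singleton _)
  have hsingle : ∀ (i : Fin n) (s : Finset ℕ),
      ℙ (X (i:ℕ) ⁻¹' {c s i}) = ENNReal.ofReal (w s i) := by
    intro i s
    by_cases h : (i : ℕ) ∈ s
    · have := hmax i i.2
      simpa [hc, hw, h, Set.preimage, Set.mem_singleton_iff] using this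
    · have := hmin i i.2
      simpa [hc, hw, h, Set.preimage, Set.mem_singleton_iff] using this
  have hPE : ∀ s, ℙ (E s) = ENNReal.ofReal (∏ k ∈ Finset.range n, w s k) := by
    intro s
    rw [hE]
    rw [hindep.meas_iInter (fun i => ⟨{c s i}, measurableSet_singleton _, rfl⟩)]
    rw [Finset.prod_congr rfl (fun i _ => hsingle i s),
      Fin.prod_univ_eq_prod_range (fun k => ENNReal.ofReal (w s k)) n,
      ← ENNReal.ofReal_prod_of_nonneg (fun i _ => hwnn s i)]
  -- almost every ω takes values in {Xmax, Xmin} at every coordinate below n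
  have hae : ∀ᵐ ω ∂ℙ, ∀ i : Fin n, X (i:ℕ) ω = Xmax ∨ X (i:ℕ) ω = Xmin := by
    rw [MeasureTheory.ae_all_iff]
    intro i
    rw [MeasureTheory.ae_iff]
    push_neg
    have hdisj : Disjoint {ω : Ω | X (i:ℕ) ω = Xmax} {ω : Ω | X (i:ℕ) ω = Xmin} := by
      rw [Set.disjoint_left]
      rintro ω h1 h2
      exact hnelt (h2 ▸ h1 ▸ rfl)
    have hA : ℙ ({ω | X (i:ℕ) ω = Xmax} ∪ {ω | X (i:ℕ) ω = Xmin}) = 1 := by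
      rw [measure_union hdisj ((hmeas i) (measurableSet_singleton Xmin)),
        hmax i i.2, hmin i i.2, ← ENNReal.ofReal_add hp0 hq0]
      norm_num
    have hcompl : {ω : Ω | X (i:ℕ) ω ≠ Xmax ∧ X (i:ℕ) ω ≠ Xmin}
        = ({ω : Ω | X (i:ℕ) ω = Xmax} ∪ {ω : Ω | X (i:ℕ) ω = Xmin})ᶜ := by
      ext ω; simp [not_or]
    have hmu : MeasurableSet ({ω : Ω | X (i:ℕ) ω = Xmax} ∪ {ω : Ω | X (i:ℕ) ω = Xmin}) :=
      ((hmeas i) (measurableSet_singleton Xmax)).union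
        ((hmeas i) (measurableSet_singleton Xmin))
    rw [hcompl, measure_compl hmu (measure_ne_top _ _), hA, measure_univ, tsub_self]
  -- identify the integrand with a simple function a.e.
  have key : (fun ω => Real.log
        (1 + K * (1 + X 0 ω) * (∏ k ∈ Finset.Ico 1 n, (1 + X k ω) - 1)))
      =ᵐ[ℙ] fun ω => ∑ s ∈ (Finset.range n).powerset,
        (E s).indicator (fun _ => G s) ω := by
    filter_upwards [hae] with ω hω
    set s₀ : Finset ℕ := (Finset.range n).filter (fun k => X k ω = Xmax) with hs₀
    have hmem : ∀ k, k ∈ s₀ ↔ k < n ∧ X k ω = Xmax := by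
      intro k; simp [hs₀]
    have hωE : ω ∈ E s₀ := by
      rw [hE]
      simp only [Set.mem_iInter, Set.mem_preimage, Set.mem_singleton_iff]
      intro i
      by_cases h : (i:ℕ) ∈ s₀
      · simp [hc, h, ((hmem i).1 h).2]
      · have hXi : X (i:ℕ) ω = Xmin := by
          rcases hω i with h1 | h1
          · exact absurd ((hmem i).2 ⟨i.2, h1⟩) h
          · exact h1
        simp [hc, h, hXi]
    have hXs : ∀ k, k < n → X k ω = c s₀ k := by
      intro k hk
      have := Set.mem_iInter.1 hωE ⟨k, hk⟩
      simpa using this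
    rw [Finset.sum_eq_single s₀]
    · rw [Set.indicator_of_mem hωE]
      have h0 : X 0 ω = c s₀ 0 := hXs 0 hn0
      have hprod : ∏ k ∈ Finset.Ico 1 n, (1 + X k ω)
          = ∏ k ∈ Finset.Ico 1 n, (1 + c s₀ k) :=
        Finset.prod_congr rfl fun k hk => by rw [hXs k (Finset.mem_Ico.1 hk).2]
      rw [hG, h0, hprod]
    · intro s hs hne'
      refine Set.indicator_of_notMem (fun hωs => hne' ?_) _
      have hXsk : ∀ i : Fin n, X (i:ℕ) ω = c s i := by
        intro i
        have := Set.mem_iInter.1 hωs i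
        simpa using this
      ext k
      constructor
      · intro hk
        have hkn : k < n := Finset.mem_range.1 (Finset.mem_powerset.1 hs hk)
        have hx := hXsk ⟨k, hkn⟩
        rw [hmem]
        exact ⟨hkn, by simpa [hc, hk] using hx⟩
      · intro hk
        rcases (hmem k).1 hk with ⟨hkn, hXk⟩
        by_contra hks
        have hx := hXsk ⟨k, hkn⟩
        simp only [hc, if_neg hks] at hx
        exact hnelt (hx ▸ hXk)
    · intro h
      exact absurd (Finset.mem_powerset.2 (Finset.filter_subset _ _)) h
  -- compute the integral of the simple function
  have hLHS : ∀ ω : Ω,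
      ((1 + K * (1 + X 0 ω) * (∏ k ∈ Finset.Ico 1 n, (1 + X k ω) - 1)) * v) / v
      = 1 + K * (1 + X 0 ω) * (∏ k ∈ Finset.Ico 1 n, (1 + X k ω) - 1) :=
    fun ω => mul_div_cancel_right₀ _ hv.ne'
  have hint : ∫ ω, Real.log
        (1 + K * (1 + X 0 ω) * (∏ k ∈ Finset.Ico 1 n, (1 + X k ω) - 1)) ∂ℙ
      = ∑ s ∈ (Finset.range n).powerset,
          (∏ k ∈ Finset.range n, w s k) * G s := by
    rw [integral_congr_ae key,
      integral_finset_sum _ (fun s _ => (integrable_const (G s)).indicator (hEmeas s))]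
    refine Finset.sum_congr rfl fun s _ => ?_
    rw [integral_indicator_const _ (hEmeas s), measureReal_def, hPE s, smul_eq_mul,
      ENNReal.toReal_ofReal (Finset.prod_nonneg fun k _ => hwnn s k)]
  simp only [hLHS]
  rw [hint]
  -- combinatorics
  have h0notin : (0:ℕ) ∉ Finset.Ico 1 n := by simp
  have hrange : Finset.range n = insert 0 (Finset.Ico 1 n) := by
    ext k
    simp only [Finset.mem_range, Finset.mem_insert, Finset.mem_Ico]
    omega
  have hIcoCard : (Finset.Ico 1 n).card = n - 1 := by
    rw [Nat.card_Ico]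
  have hcomb : ∑ s ∈ (Finset.range n).powerset,
        (∏ k ∈ Finset.range n, w s k) * G s
      = ∑ i ∈ Finset.range n,
          ((n-1).choose i : ℝ) * (p^i * (1-p)^(n-1-i)) *
          ((1-p) * Real.log (1 + K*(1+Xmin)*((1+Xmax)^i*(1+Xmin)^(n-1-i)-1))
           + p * Real.log (1 + K*(1+Xmax)*((1+Xmax)^i*(1+Xmin)^(n-1-i)-1))) := by
    conv_lhs => rw [hrange]
    rw [Finset.sum_powerset_insert h0notin, ← Finset.sum_add_distrib]
    have hterm : ∀ s ∈ (Finset.Ico 1 n).powerset,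
        (∏ k ∈ insert 0 (Finset.Ico 1 n), w s k) * G s
          + (∏ k ∈ insert 0 (Finset.Ico 1 n), w (insert 0 s) k) * G (insert 0 s)
        = (fun i : ℕ => (p^i * (1-p)^(n-1-i)) *
            ((1-p) * Real.log (1 + K*(1+Xmin)*((1+Xmax)^i*(1+Xmin)^(n-1-i)-1))
             + p * Real.log (1 + K*(1+Xmax)*((1+Xmax)^i*(1+Xmin)^(n-1-i)-1)))) s.card := by
      intro s hs
      have hssub : s ⊆ Finset.Ico 1 n := Finset.mem_powerset.1 hs
      have h0s : (0:ℕ) ∉ s := fun h => h0notin (hssub h)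
      have hWs : ∏ k ∈ Finset.Ico 1 n, w s k = p ^ s.card * (1-p) ^ (n-1-s.card) := by
        rw [hw]; rw [prod_ite_card hssub, hIcoCard]
      have hWs' : ∏ k ∈ Finset.Ico 1 n, w (insert 0 s) k
          = p ^ s.card * (1-p) ^ (n-1-s.card) := by
        rw [← hWs]
        refine Finset.prod_congr rfl fun k hk => ?_
        have hk0 : k ≠ 0 := by
          have := (Finset.mem_Ico.1 hk).1; omega
        simp [hw, Finset.mem_insert, hk0]
      have hPs : ∏ k ∈ Finset.Ico 1 n, (1 + c s k)
          = (1+Xmax) ^ s.card * (1+Xmin) ^ (n-1-s.card) := by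
        have : ∀ k ∈ Finset.Ico 1 n,
            1 + c s k = if k ∈ s then 1+Xmax else 1+Xmin := by
          intro k _; by_cases h : k ∈ s <;> simp [hc, h]
        rw [Finset.prod_congr rfl this, prod_ite_card hssub, hIcoCard]
      have hPs' : ∏ k ∈ Finset.Ico 1 n, (1 + c (insert 0 s) k)
          = (1+Xmax) ^ s.card * (1+Xmin) ^ (n-1-s.card) := by
        rw [← hPs]
        refine Finset.prod_congr rfl fun k hk => ?_
        have hk0 : k ≠ 0 := by
          have := (Finset.mem_Ico.1 hk).1; omega
        simp [hc, Finset.mem_insert, hk0]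
      have hw0 : w s 0 = 1 - p := by simp [hw, h0s]
      have hw0' : w (insert 0 s) 0 = p := by simp [hw]
      have hc0 : c s 0 = Xmin := by simp [hc, h0s]
      have hc0' : c (insert 0 s) 0 = Xmax := by simp [hc]
      rw [Finset.prod_insert h0notin, Finset.prod_insert h0notin,
        hWs, hWs', hw0, hw0', hG]
      simp only [hc0, hc0', hPs, hPs']
      ring
    rw [Finset.sum_congr rfl hterm]
    beta_reduce
    rw [Finset.sum_powerset_apply_card
      (f := fun i : ℕ => p ^ i * (1 - p) ^ (n - 1 - i) *
        ((1 - p) * Real.log (1 + K * (1 + Xmin) * ((1 + Xmax) ^ i * (1 + Xmin) ^ (n - 1 - i) - 1)) +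
          p * Real.log (1 + K * (1 + Xmax) * ((1 + Xmax) ^ i * (1 + Xmin) ^ (n - 1 - i) - 1))))
      (x := Finset.Ico 1 n), hIcoCard, Nat.sub_add_cancel hn]
    refine Finset.sum_congr rfl fun i _ => ?_
    rw [nsmul_eq_mul]
    ring
  rw [hcomb, Finset.mul_sum, Finset.mul_sum, Finset.mul_sum, ← Finset.sum_add_distrib]
  refine Finset.sum_congr rfl fun i _ => ?_
  ring
end
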